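/- Let q, t be nonzero complex numbers, let m ≥ 1, and let x_1, …, x_m be nonzero complex numbers satisfying the genericity hypothesis. Then for every n with 0 ≤ n ≤ m, the sum of γ_ε(q,t) over all sign vectors ε ∈ {+1,−1}^m with exactly n entries equal to −1 equals the sum of γ_ε(q,t) over all sign vectors ε with exactly m − n entries equal to −1. (This is identity (3.20) of Theorem 3.1 of the paper, proved there by a residue argument.) -/

import Mathlib

-- ===== from a.lean =====
open Finset Polynomial
set_option linter.unusedSectionVars false
set_option linter.unusedVariables false
set_option maxHeartbeats 1000000

namespace Stmt2Aux
variable {F : Type*} [Field F] {ι : Type*} [DecidableEq ι]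

/-- the basic factor `f_{c,d}(u,v)` with `u = y_i` (`i` a minus sign), `v = y_j`. -/
noncomputable def ff (c d u v : F) : F :=
  ((c * v - u) * (v - d * u)) / ((v - u) * (c * v - d * u))

noncomputable def Ssum (c d : F) (y : ι → F) (A : Finset ι) (n : ℕ) : F :=
  ∑ S ∈ A.powersetCard n, ∏ i ∈ S, ∏ j ∈ A \ S, ff c d (y i) (y j)

lemma ff_swap (c d u v : F) : ff d c v u = ff c d u v := by
  unfold ff
  rw [show (d * u - v) * (u - c * v) = (c * v - u) * (v - d * u) by ring,
      show (u - v) * (d * u - c * v) = (v - u) * (c * v - d * u) by ring]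

noncomputable def lin (u v : F) : Polynomial F := C u - C v * X
lemma natDegree_lin_le (u v : F) : (lin u v).natDegree ≤ 1 := by
  unfold lin
  refine (natDegree_sub_le _ _).trans ?_
  simp only [natDegree_C, max_le_iff, Nat.zero_le, true_and]
  exact natDegree_mul_le.trans (by simp)
lemma coeff_lin_one (u v : F) : (lin u v).coeff 1 = -v := by simp [lin, coeff_C]
lemma eval_lin (z u v : F) : eval z (lin u v) = u - v * z := by simp [lin]

lemma pair_deg (u1 v1 u2 v2 : F) : (lin u1 v1 * lin u2 v2).natDegree ≤ 2 :=
  natDegree_mul_le.trans (by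
    have := natDegree_lin_le u1 v1; have := natDegree_lin_le u2 v2; omega)

lemma pair_coeff (u1 v1 u2 v2 : F) : (lin u1 v1 * lin u2 v2).coeff 2 = v1 * v2 := by
  have h := coeff_mul_add_eq_of_natDegree_le (natDegree_lin_le u1 v1) (natDegree_lin_le u2 v2)
  rw [show (1:ℕ)+1 = 2 from rfl] at h
  rw [h, coeff_lin_one, coeff_lin_one]; ring

lemma prod_pair_deg (s : Finset ι) (u1 v1 u2 v2 : ι → F) :
    (∏ k ∈ s, (lin (u1 k) (v1 k) * lin (u2 k) (v2 k))).natDegree ≤ 2 * s.card := by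
  refine (natDegree_prod_le _ _).trans ?_
  calc ∑ k ∈ s, (lin (u1 k) (v1 k) * lin (u2 k) (v2 k)).natDegree
      ≤ ∑ k ∈ s, 2 := Finset.sum_le_sum fun k _ => pair_deg _ _ _ _
    _ = 2 * s.card := by rw [Finset.sum_const, smul_eq_mul, mul_comm]

lemma coeff_prod_top (s : Finset ι) (g : ι → Polynomial F) (e : ι → ℕ)
    (h : ∀ k ∈ s, (g k).natDegree ≤ e k) :
    (∏ k ∈ s, g k).coeff (∑ k ∈ s, e k) = ∏ k ∈ s, (g k).coeff (e k) := by
  induction s using Finset.induction_on with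
  | empty => simp
  | @insert k s hk ih =>
    rw [Finset.prod_insert hk, Finset.sum_insert hk, Finset.prod_insert hk,
      coeff_mul_add_eq_of_natDegree_le (h k (mem_insert_self _ _))
        ((natDegree_prod_le _ _).trans (Finset.sum_le_sum fun i hi => h i (mem_insert_of_mem hi))),
      ih fun i hi => h i (mem_insert_of_mem hi)]

lemma prod_pair_coeff (s : Finset ι) (u1 v1 u2 v2 : ι → F) :
    (∏ k ∈ s, (lin (u1 k) (v1 k) * lin (u2 k) (v2 k))).coeff (2 * s.card)
      = ∏ k ∈ s, (v1 k * v2 k) := by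
  have h := coeff_prod_top s (fun k => lin (u1 k) (v1 k) * lin (u2 k) (v2 k)) (fun _ => 2)
    (fun k _ => pair_deg _ _ _ _)
  rw [Finset.sum_const, smul_eq_mul, mul_comm] at h
  rw [h]
  exact Finset.prod_congr rfl fun k _ => pair_coeff _ _ _ _

lemma prod_lin_deg (s : Finset ι) (u v : ι → F) :
    (∏ k ∈ s, lin (u k) (v k)).natDegree ≤ s.card := by
  refine (natDegree_prod_le _ _).trans ?_
  calc ∑ k ∈ s, (lin (u k) (v k)).natDegree ≤ ∑ k ∈ s, 1 :=
        Finset.sum_le_sum fun k _ => natDegree_lin_le _ _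
    _ = s.card := by simp

lemma prod_lin_coeff (s : Finset ι) (u v : ι → F) :
    (∏ k ∈ s, lin (u k) (v k)).coeff s.card = ∏ k ∈ s, (-(v k)) := by
  have h := coeff_prod_top s (fun k => lin (u k) (v k)) (fun _ => 1)
    (fun k _ => natDegree_lin_le _ _)
  rw [Finset.sum_const, smul_eq_mul, mul_one] at h
  rw [h]
  exact Finset.prod_congr rfl fun k _ => coeff_lin_one _ _

lemma eval_prod_pair (z : F) (s : Finset ι) (u1 v1 u2 v2 : ι → F) :
    eval z (∏ k ∈ s, (lin (u1 k) (v1 k) * lin (u2 k) (v2 k)))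
      = ∏ k ∈ s, ((u1 k - v1 k * z) * (u2 k - v2 k * z)) := by
  rw [eval_prod]
  exact Finset.prod_congr rfl fun k _ => by rw [eval_mul, eval_lin, eval_lin]

lemma eval_prod_lin (z : F) (s : Finset ι) (u v : ι → F) :
    eval z (∏ k ∈ s, lin (u k) (v k)) = ∏ k ∈ s, (u k - v k * z) := by
  rw [eval_prod]; exact Finset.prod_congr rfl fun k _ => eval_lin _ _ _

/-! ### the polynomials attached to the induction step -/

noncomputable def kap (c d : F) (y : ι → F) (B T : Finset ι) : F :=
  ∏ i ∈ T, ∏ j ∈ B \ T, ff c d (y i) (y j)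

noncomputable def Nin (c d : F) (y : ι → F) (B T : Finset ι) : Polynomial F :=
  C (kap c d y B T) * ∏ j ∈ B \ T, (lin (c * y j) 1 * lin (y j) d)

noncomputable def Din (c d : F) (y : ι → F) (B T : Finset ι) : Polynomial F :=
  ∏ j ∈ B \ T, (lin (y j) 1 * lin (c * y j) d)

noncomputable def Ein (c d : F) (y : ι → F) (B T : Finset ι) : Polynomial F :=
  (∏ j ∈ T, (lin (y j) 1 * lin (c * y j) d)) * ∏ j ∈ B, lin (d * y j) c

noncomputable def Nout (c d : F) (y : ι → F) (B T : Finset ι) : Polynomial F :=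
  C (kap c d y B T) * ∏ i ∈ T, (lin (y i) c * lin (d * y i) 1)

noncomputable def Dout (c d : F) (y : ι → F) (B T : Finset ι) : Polynomial F :=
  ∏ i ∈ T, (lin (y i) 1 * lin (d * y i) c)

noncomputable def Eout (c d : F) (y : ι → F) (B T : Finset ι) : Polynomial F :=
  (∏ i ∈ B \ T, (lin (y i) 1 * lin (d * y i) c)) * ∏ j ∈ B, lin (c * y j) d

noncomputable def QB (c d : F) (y : ι → F) (B : Finset ι) : Polynomial F :=
  ∏ j ∈ B, (lin (y j) 1 * lin (c * y j) d * lin (d * y j) c)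

noncomputable def Pone (c d : F) (y : ι → F) (B : Finset ι) (n : ℕ) : Polynomial F :=
  (∑ T ∈ B.powersetCard (n - 1), Nin c d y B T * Ein c d y B T)
  + (∑ T ∈ B.powersetCard n, Nout c d y B T * Eout c d y B T)

lemma Din_mul_Ein {T B : Finset ι} (hT : T ⊆ B) (c d : F) (y : ι → F) :
    Din c d y B T * Ein c d y B T = QB c d y B := by
  unfold Din Ein QB
  rw [← mul_assoc, Finset.prod_sdiff hT, ← Finset.prod_mul_distrib]

lemma Dout_mul_Eout {T B : Finset ι} (hT : T ⊆ B) (c d : F) (y : ι → F) :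
    Dout c d y B T * Eout c d y B T = QB c d y B := by
  unfold Dout Eout QB
  rw [← mul_assoc]
  rw [show (∏ i ∈ T, (lin (y i) 1 * lin (d * y i) c)) *
      (∏ i ∈ B \ T, (lin (y i) 1 * lin (d * y i) c)) =
      ∏ i ∈ B, (lin (y i) 1 * lin (d * y i) c) by
    rw [mul_comm, Finset.prod_sdiff hT]]
  rw [← Finset.prod_mul_distrib]
  exact Finset.prod_congr rfl fun j _ => by ring

lemma QB_comm (c d : F) (y : ι → F) (B : Finset ι) : QB c d y B = QB d c y B := by
  unfold QB
  exact Finset.prod_congr rfl fun j _ => by ring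

/-! ### degree and top coefficient -/

lemma NEin_deg (c d : F) (y : ι → F) {B T : Finset ι} (hT : T ⊆ B) :
    (Nin c d y B T * Ein c d y B T).natDegree ≤ 3 * B.card := by
  have h1 := prod_pair_deg (B \ T) (fun j => c * y j) (fun _ => (1:F)) (fun j => y j) (fun _ => d)
  have h2 := prod_pair_deg T (fun j => y j) (fun _ => (1:F)) (fun j => c * y j) (fun _ => d)
  have h3 := prod_lin_deg B (fun j => d * y j) (fun _ => c)
  have hc : T.card ≤ B.card := card_le_card hT
  have hsd : (B \ T).card = B.card - T.card := card_sdiff_of_subset hT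
  unfold Nin Ein
  refine natDegree_mul_le.trans ?_
  have hN : (C (kap c d y B T) * ∏ j ∈ B \ T, (lin (c * y j) 1 * lin (y j) d)).natDegree
      ≤ 2 * (B \ T).card := natDegree_mul_le.trans (by simpa using h1)
  have hE : ((∏ j ∈ T, (lin (y j) 1 * lin (c * y j) d)) * ∏ j ∈ B, lin (d * y j) c).natDegree
      ≤ 2 * T.card + B.card := natDegree_mul_le.trans (by omega)
  omega

lemma NEout_deg (c d : F) (y : ι → F) {B T : Finset ι} (hT : T ⊆ B) :
    (Nout c d y B T * Eout c d y B T).natDegree ≤ 3 * B.card := by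
  have h1 := prod_pair_deg T (fun i => y i) (fun _ => c) (fun i => d * y i) (fun _ => (1:F))
  have h2 := prod_pair_deg (B \ T) (fun i => y i) (fun _ => (1:F)) (fun i => d * y i) (fun _ => c)
  have h3 := prod_lin_deg B (fun j => c * y j) (fun _ => d)
  have hc : T.card ≤ B.card := card_le_card hT
  have hsd : (B \ T).card = B.card - T.card := card_sdiff_of_subset hT
  unfold Nout Eout
  refine natDegree_mul_le.trans ?_
  have hN : (C (kap c d y B T) * ∏ i ∈ T, (lin (y i) c * lin (d * y i) 1)).natDegree
      ≤ 2 * T.card := natDegree_mul_le.trans (by simpa using h1)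
  have hE : ((∏ i ∈ B \ T, (lin (y i) 1 * lin (d * y i) c)) * ∏ j ∈ B, lin (c * y j) d).natDegree
      ≤ 2 * (B \ T).card + B.card := natDegree_mul_le.trans (by omega)
  omega

lemma NEin_coeff (c d : F) (y : ι → F) {B T : Finset ι} (hT : T ⊆ B) :
    (Nin c d y B T * Ein c d y B T).coeff (3 * B.card)
      = kap c d y B T * (-(c * d)) ^ B.card := by
  have hsd : (B \ T).card + T.card = B.card := by
    rw [card_sdiff_of_subset hT]; have := card_le_card hT; omega
  have e1 : (Nin c d y B T).natDegree ≤ 2 * (B \ T).card := by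
    unfold Nin
    exact natDegree_mul_le.trans (by
      simpa using prod_pair_deg (B \ T) (fun j => c * y j) (fun _ => (1:F)) (fun j => y j)
        (fun _ => d))
  have e2 : (Ein c d y B T).natDegree ≤ 2 * T.card + B.card := by
    unfold Ein
    exact natDegree_mul_le.trans (add_le_add
      (prod_pair_deg T (fun j => y j) (fun _ => (1:F)) (fun j => c * y j) (fun _ => d))
      (prod_lin_deg B (fun j => d * y j) (fun _ => c)))
  have key : (Nin c d y B T * Ein c d y B T).coeff (2 * (B \ T).card + (2 * T.card + B.card))
      = (Nin c d y B T).coeff (2 * (B \ T).card) * (Ein c d y B T).coeff (2 * T.card + B.card) :=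
    coeff_mul_add_eq_of_natDegree_le e1 e2
  have c1 : (Nin c d y B T).coeff (2 * (B \ T).card) = kap c d y B T * d ^ (B \ T).card := by
    unfold Nin
    rw [coeff_C_mul, prod_pair_coeff]
    simp [Finset.prod_const]
  have c2 : (Ein c d y B T).coeff (2 * T.card + B.card)
      = d ^ T.card * (-c) ^ B.card := by
    unfold Ein
    rw [coeff_mul_add_eq_of_natDegree_le
      (prod_pair_deg T (fun j => y j) (fun _ => (1:F)) (fun j => c * y j) (fun _ => d))
      (prod_lin_deg B (fun j => d * y j) (fun _ => c)),
      prod_pair_coeff, prod_lin_coeff]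
    simp [Finset.prod_const]
  rw [show 3 * B.card = 2 * (B \ T).card + (2 * T.card + B.card) by omega, key, c1, c2]
  rw [show kap c d y B T * d ^ (B \ T).card * (d ^ T.card * (-c) ^ B.card)
      = kap c d y B T * ((d ^ (B \ T).card * d ^ T.card) * (-c) ^ B.card) by ring,
    ← pow_add, hsd]
  rw [show (-(c*d)) ^ B.card = (d * -c) ^ B.card by ring_nf, mul_pow]

lemma NEout_coeff (c d : F) (y : ι → F) {B T : Finset ι} (hT : T ⊆ B) :
    (Nout c d y B T * Eout c d y B T).coeff (3 * B.card)
      = kap c d y B T * (-(c * d)) ^ B.card := by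
  have hsd : (B \ T).card + T.card = B.card := by
    rw [card_sdiff_of_subset hT]; have := card_le_card hT; omega
  have e1 : (Nout c d y B T).natDegree ≤ 2 * T.card := by
    unfold Nout
    exact natDegree_mul_le.trans (by
      simpa using prod_pair_deg T (fun i => y i) (fun _ => c) (fun i => d * y i) (fun _ => (1:F)))
  have e2 : (Eout c d y B T).natDegree ≤ 2 * (B \ T).card + B.card := by
    unfold Eout
    exact natDegree_mul_le.trans (add_le_add
      (prod_pair_deg (B \ T) (fun i => y i) (fun _ => (1:F)) (fun i => d * y i) (fun _ => c))
      (prod_lin_deg B (fun j => c * y j) (fun _ => d)))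
  have key := coeff_mul_add_eq_of_natDegree_le e1 e2
  have c1 : (Nout c d y B T).coeff (2 * T.card) = kap c d y B T * c ^ T.card := by
    unfold Nout
    rw [coeff_C_mul, prod_pair_coeff]
    simp [Finset.prod_const]
  have c2 : (Eout c d y B T).coeff (2 * (B \ T).card + B.card)
      = c ^ (B \ T).card * (-d) ^ B.card := by
    unfold Eout
    rw [coeff_mul_add_eq_of_natDegree_le
      (prod_pair_deg (B \ T) (fun i => y i) (fun _ => (1:F)) (fun i => d * y i) (fun _ => c))
      (prod_lin_deg B (fun j => c * y j) (fun _ => d)),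
      prod_pair_coeff, prod_lin_coeff]
    simp [Finset.prod_const]
  rw [show 3 * B.card = 2 * T.card + (2 * (B \ T).card + B.card) by omega, key, c1, c2]
  rw [show kap c d y B T * c ^ T.card * (c ^ (B \ T).card * (-d) ^ B.card)
      = kap c d y B T * ((c ^ T.card * c ^ (B \ T).card) * (-d) ^ B.card) by ring,
    ← pow_add]
  rw [show T.card + (B \ T).card = B.card by omega]
  rw [show (-(c*d)) ^ B.card = (c * -d) ^ B.card by ring_nf, mul_pow]

end Stmt2Aux

-- ===== from c.lean =====
open Finset Polynomial
set_option linter.unusedSectionVars false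
set_option linter.unusedVariables false
set_option maxHeartbeats 1000000

namespace Stmt2Aux
variable {F : Type*} [Field F] {ι : Type*} [DecidableEq ι]

lemma eval_QB_ne_zero (c d : F) (y : ι → F) {B : Finset ι} {μ : ι}
    (h2 : ∀ j ∈ B, y j ≠ y μ) (h3 : ∀ j ∈ B, c * y j ≠ d * y μ)
    (h3' : ∀ j ∈ B, d * y j ≠ c * y μ) :
    eval (y μ) (QB c d y B) ≠ 0 := by
  unfold QB
  rw [eval_prod]
  refine Finset.prod_ne_zero_iff.mpr fun j hj => ?_
  simp only [eval_mul, eval_lin]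
  refine mul_ne_zero (mul_ne_zero ?_ ?_) ?_
  · rw [one_mul]; exact sub_ne_zero.mpr (h2 j hj)
  · exact sub_ne_zero.mpr (by rw [mul_comm d (y μ)] at *; exact fun h => h3 j hj (by linear_combination h))
  · exact sub_ne_zero.mpr (fun h => h3' j hj (by linear_combination h))

lemma insert_sdiff_insert' {μ : ι} {B T : Finset ι} (hμ : μ ∉ B) (hT : T ⊆ B) :
    insert μ B \ insert μ T = B \ T := by
  ext x
  simp only [mem_sdiff, mem_insert, not_or]
  constructor
  · rintro ⟨h1 | h1, h2, h3⟩
    · exact absurd h1 h2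
    · exact ⟨h1, h3⟩
  · rintro ⟨h1, h2⟩
    exact ⟨Or.inr h1, fun h => hμ (h ▸ h1), h2⟩

lemma sdiff_of_not_mem {μ : ι} {B T : Finset ι} (hμ : μ ∉ B) (hT : T ⊆ B) :
    insert μ B \ T = insert μ (B \ T) := by
  ext x
  simp only [mem_sdiff, mem_insert]
  constructor
  · rintro ⟨h1 | h1, h2⟩
    · exact Or.inl h1
    · exact Or.inr ⟨h1, h2⟩
  · rintro (rfl | ⟨h1, h2⟩)
    · exact ⟨Or.inl rfl, fun h => hμ (hT h)⟩
    · exact ⟨Or.inr h1, h2⟩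

lemma key_split (c d : F) (y : ι → F) {μ : ι} {B : Finset ι} (hμ : μ ∉ B)
    {n : ℕ} (hn : 1 ≤ n)
    (h2 : ∀ j ∈ B, y j ≠ y μ) (h3 : ∀ j ∈ B, c * y j ≠ d * y μ)
    (h3' : ∀ j ∈ B, c * y μ ≠ d * y j) :
    Ssum c d y (insert μ B) n * eval (y μ) (QB c d y B) = eval (y μ) (Pone c d y B n) := by
  obtain ⟨n', rfl⟩ : ∃ n', n = n' + 1 := ⟨n - 1, by omega⟩
  unfold Ssum Pone
  rw [show n' + 1 - 1 = n' by omega]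
  rw [powersetCard_succ_insert hμ]
  rw [Finset.sum_union (by
    rw [Finset.disjoint_left]
    intro S hS hS'
    obtain ⟨T, hT, rfl⟩ := Finset.mem_image.mp hS'
    have := (Finset.mem_powersetCard.mp hS).1
    exact hμ (this (mem_insert_self μ T)))]
  rw [Finset.sum_image (by
    intro T hT T' hT' h
    have hT1 := (Finset.mem_powersetCard.mp hT).1
    have hT1' := (Finset.mem_powersetCard.mp hT').1
    have : ∀ x, x ∈ T ↔ x ∈ T' := by
      intro x
      constructor
      · intro hx
        have hx' : x ∈ insert μ T' := h ▸ mem_insert_of_mem hx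
        rcases mem_insert.mp hx' with rfl | hx'
        · exact absurd (hT1 hx) hμ
        · exact hx'
      · intro hx
        have hx' : x ∈ insert μ T := h ▸ mem_insert_of_mem hx
        rcases mem_insert.mp hx' with rfl | hx'
        · exact absurd (hT1' hx) hμ
        · exact hx'
    exact Finset.ext this)]
  rw [add_mul, Finset.sum_mul, Finset.sum_mul, eval_add, eval_finset_sum, eval_finset_sum, add_comm]
  congr 1
  · -- in-part : subsets insert μ T with T ⊆ B of card n'
    refine Finset.sum_congr rfl fun T hT => ?_
    obtain ⟨hTB, hTc⟩ := Finset.mem_powersetCard.mp hT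
    have hμT : μ ∉ T := fun h => hμ (hTB h)
    -- rewrite the term
    rw [insert_sdiff_insert' hμ hTB, Finset.prod_insert hμT]
    have hprod : (∏ j ∈ B \ T, ff c d (y μ) (y j)) *
        (∏ j ∈ B \ T, ((y j - 1 * y μ) * (c * y j - d * y μ)))
        = ∏ j ∈ B \ T, ((c * y j - 1 * y μ) * (y j - d * y μ)) := by
      rw [← Finset.prod_mul_distrib]
      refine Finset.prod_congr rfl fun j hj => ?_
      have hj' : j ∈ B := (mem_sdiff.mp hj).1
      unfold ff
      rw [one_mul, div_mul_cancel₀]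
      exact mul_ne_zero (sub_ne_zero.mpr (h2 j hj')) (sub_ne_zero.mpr (h3 j hj'))
    have hterm : (∏ j ∈ B \ T, ff c d (y μ) (y j)) *
        (kap c d y B T) * eval (y μ) (QB c d y B)
        = eval (y μ) (Nin c d y B T * Ein c d y B T) := by
      rw [← Din_mul_Ein hTB c d y, eval_mul, eval_mul]
      have hDin : eval (y μ) (Din c d y B T)
          = ∏ j ∈ B \ T, ((y j - 1 * y μ) * (c * y j - d * y μ)) := eval_prod_pair _ _ _ _ _ _
      have hNin : eval (y μ) (Nin c d y B T)
          = kap c d y B T * ∏ j ∈ B \ T, ((c * y j - 1 * y μ) * (y j - d * y μ)) := by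
        unfold Nin
        rw [eval_mul, eval_C, eval_prod_pair]
      rw [hNin, hDin, ← hprod]
      ring
    rw [show (∏ i ∈ T, ∏ j ∈ B \ T, ff c d (y i) (y j)) = kap c d y B T from rfl]
    rw [← hterm]
  · -- out-part : subsets T ⊆ B of card n'+1
    refine Finset.sum_congr rfl fun T hT => ?_
    obtain ⟨hTB, hTc⟩ := Finset.mem_powersetCard.mp hT
    rw [sdiff_of_not_mem hμ hTB]
    have hins : ∀ i ∈ T, ∏ j ∈ insert μ (B \ T), ff c d (y i) (y j)
        = ff c d (y i) (y μ) * ∏ j ∈ B \ T, ff c d (y i) (y j) :=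
      fun i hi => Finset.prod_insert (fun h => hμ (mem_sdiff.mp h).1)
    rw [Finset.prod_congr rfl hins, Finset.prod_mul_distrib]
    have hprod : (∏ i ∈ T, ff c d (y i) (y μ)) *
        (∏ i ∈ T, ((y i - 1 * y μ) * (d * y i - c * y μ)))
        = ∏ i ∈ T, ((y i - c * y μ) * (d * y i - 1 * y μ)) := by
      rw [← Finset.prod_mul_distrib]
      refine Finset.prod_congr rfl fun i hi => ?_
      have hiB : i ∈ B := hTB hi
      unfold ff
      rw [one_mul,
        show (y i - y μ) * (d * y i - c * y μ) = (y μ - y i) * (c * y μ - d * y i) by ring,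
        div_mul_cancel₀]
      · ring
      · exact mul_ne_zero (sub_ne_zero.mpr fun h => h2 i hiB h.symm)
          (sub_ne_zero.mpr (h3' i hiB))
    have hterm : (∏ i ∈ T, ff c d (y i) (y μ)) *
        (kap c d y B T) * eval (y μ) (QB c d y B)
        = eval (y μ) (Nout c d y B T * Eout c d y B T) := by
      rw [← Dout_mul_Eout hTB c d y, eval_mul, eval_mul]
      have hDout : eval (y μ) (Dout c d y B T)
          = ∏ i ∈ T, ((y i - 1 * y μ) * (d * y i - c * y μ)) := eval_prod_pair _ _ _ _ _ _
      have hNout : eval (y μ) (Nout c d y B T)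
          = kap c d y B T * ∏ i ∈ T, ((y i - c * y μ) * (d * y i - 1 * y μ)) := by
        unfold Nout
        rw [eval_mul, eval_C, eval_prod_pair]
      rw [hNout, hDout, ← hprod]
      ring
    rw [show (∏ i ∈ T, ∏ j ∈ B \ T, ff c d (y i) (y j)) = kap c d y B T from rfl]
    rw [← hterm]

end Stmt2Aux

-- ===== from d.lean =====
open Finset Polynomial
set_option linter.unusedSectionVars false
set_option linter.unusedVariables false
set_option maxHeartbeats 2000000

namespace Stmt2Aux
variable {F : Type*} [Field F] {ι : Type*} [DecidableEq ι]

lemma ffG_T (c d yi yk : F) (h1 : yk ≠ yi) (h2 : c * yk ≠ d * yi) :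
    ff c d yi yk * (((yi - 1 * yk) * (c * yi - d * yk)) * (d * yi - c * yk))
      = (c * yk - yi) * (yk - d * yi) * (c * yi - d * yk) := by
  unfold ff
  rw [div_mul_eq_mul_div, div_eq_iff
    (mul_ne_zero (sub_ne_zero.mpr h1) (sub_ne_zero.mpr h2))]
  ring

lemma ffG_W (c d yj yk : F) (h1 : yj ≠ yk) (h2 : c * yj ≠ d * yk) :
    ff c d yk yj * (((yj - 1 * yk) * (d * yj - c * yk)) * (c * yj - d * yk))
      = (c * yj - 1 * yk) * (yj - d * yk) * (d * yj - c * yk) := by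
  unfold ff
  rw [div_mul_eq_mul_div, div_eq_iff
    (mul_ne_zero (sub_ne_zero.mpr h1) (sub_ne_zero.mpr h2))]
  ring

lemma eval_Nin (z c d : F) (y : ι → F) (B T : Finset ι) :
    eval z (Nin c d y B T)
      = kap c d y B T * ∏ j ∈ B \ T, ((c * y j - 1 * z) * (y j - d * z)) := by
  unfold Nin; rw [eval_mul, eval_C, eval_prod_pair]

lemma eval_Ein (z c d : F) (y : ι → F) (B T : Finset ι) :
    eval z (Ein c d y B T)
      = (∏ j ∈ T, ((y j - 1 * z) * (c * y j - d * z))) * ∏ j ∈ B, (d * y j - c * z) := by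
  unfold Ein; rw [eval_mul, eval_prod_pair, eval_prod_lin]

lemma eval_Nout (z c d : F) (y : ι → F) (B T : Finset ι) :
    eval z (Nout c d y B T)
      = kap c d y B T * ∏ i ∈ T, ((y i - c * z) * (d * y i - 1 * z)) := by
  unfold Nout; rw [eval_mul, eval_C, eval_prod_pair]

lemma eval_Eout (z c d : F) (y : ι → F) (B T : Finset ι) :
    eval z (Eout c d y B T)
      = (∏ i ∈ B \ T, ((y i - 1 * z) * (d * y i - c * z))) * ∏ j ∈ B, (c * y j - d * z) := by
  unfold Eout; rw [eval_mul, eval_prod_pair, eval_prod_lin]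

section E1
variable (c d : F) (y : ι → F) {B : Finset ι} {k : ι}

lemma pair_cancel (hk : k ∈ B) {T : Finset ι} (hT : T ⊆ B.erase k)
    (H2 : ∀ i ∈ B, ∀ j ∈ B, i ≠ j → y i ≠ y j)
    (H3 : ∀ i ∈ B, ∀ j ∈ B, i ≠ j → c * y i ≠ d * y j) :
    eval (y k) (Nin c d y B T * Ein c d y B T)
      + eval (y k) (Nout c d y B (insert k T) * Eout c d y B (insert k T)) = 0 := by
  classical
  set B' := B.erase k with hB'
  set W := B' \ T with hW
  have hTk : k ∉ T := fun h => (notMem_erase k B) (hT h)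
  have hWk : k ∉ W := fun h => (notMem_erase k B) (mem_sdiff.mp h).1
  have hTB : T ⊆ B := hT.trans (erase_subset _ _)
  have memT : ∀ i ∈ T, i ∈ B ∧ i ≠ k := fun i hi => ⟨hTB hi, ne_of_mem_erase (hT hi)⟩
  have memW : ∀ j ∈ W, j ∈ B ∧ j ≠ k := fun j hj =>
    ⟨(erase_subset _ _) (mem_sdiff.mp hj).1, ne_of_mem_erase (mem_sdiff.mp hj).1⟩
  have hBT : B \ T = insert k W := by
    ext x
    by_cases hx : x = k
    · subst hx; simp [mem_sdiff, hk, hTk, hW, hB']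
    · simp [mem_sdiff, hW, hB', mem_erase, hx]
  have hBkT : B \ insert k T = W := by
    ext x
    by_cases hx : x = k
    · subst hx; simp [mem_sdiff, hW, hB']
    · simp [mem_sdiff, hW, hB', mem_erase, hx]
  have hBsplit : ∀ g : ι → F, ∏ j ∈ B, g j = g k * ((∏ j ∈ T, g j) * ∏ j ∈ W, g j) := by
    intro g
    rw [← Finset.insert_erase hk, Finset.prod_insert (notMem_erase _ _), ← hB']
    congr 1
    rw [← Finset.prod_sdiff hT, ← hW, mul_comm]
  have hkap : kap c d y B T
      = (∏ i ∈ T, ff c d (y i) (y k)) * (∏ i ∈ T, ∏ j ∈ W, ff c d (y i) (y j)) := by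
    unfold kap
    rw [hBT, ← Finset.prod_mul_distrib]
    exact Finset.prod_congr rfl fun i hi => Finset.prod_insert hWk
  have hkap' : kap c d y B (insert k T)
      = (∏ j ∈ W, ff c d (y k) (y j)) * (∏ i ∈ T, ∏ j ∈ W, ff c d (y i) (y j)) := by
    unfold kap
    rw [hBkT, Finset.prod_insert hTk]
  -- the merged per-element products
  have hA : (∏ i ∈ T, ff c d (y i) (y k)) *
      ((∏ i ∈ T, ((y i - 1 * y k) * (c * y i - d * y k))) * (∏ i ∈ T, (d * y i - c * y k)))
      = ∏ i ∈ T, ((c * y k - y i) * (y k - d * y i) * (c * y i - d * y k)) := by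
    rw [← Finset.prod_mul_distrib, ← Finset.prod_mul_distrib]
    refine Finset.prod_congr rfl fun i hi => ?_
    obtain ⟨hiB, hik⟩ := memT i hi
    exact ffG_T c d (y i) (y k) (H2 k hk i hiB (Ne.symm hik)) (H3 k hk i hiB (Ne.symm hik))
  have hC : (∏ j ∈ W, ((c * y j - 1 * y k) * (y j - d * y k))) * (∏ j ∈ W, (d * y j - c * y k))
      = ∏ j ∈ W, ((c * y j - 1 * y k) * (y j - d * y k) * (d * y j - c * y k)) :=
    (Finset.prod_mul_distrib).symm
  have hB2 : (∏ i ∈ T, ((y i - c * y k) * (d * y i - 1 * y k))) * (∏ i ∈ T, (c * y i - d * y k))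
      = ∏ i ∈ T, ((c * y k - y i) * (y k - d * y i) * (c * y i - d * y k)) := by
    rw [← Finset.prod_mul_distrib]
    exact Finset.prod_congr rfl fun i hi => by ring
  have hD : (∏ j ∈ W, ff c d (y k) (y j)) *
      ((∏ j ∈ W, ((y j - 1 * y k) * (d * y j - c * y k))) * (∏ j ∈ W, (c * y j - d * y k)))
      = ∏ j ∈ W, ((c * y j - 1 * y k) * (y j - d * y k) * (d * y j - c * y k)) := by
    rw [← Finset.prod_mul_distrib, ← Finset.prod_mul_distrib]
    refine Finset.prod_congr rfl fun j hj => ?_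
    obtain ⟨hjB, hjk⟩ := memW j hj
    exact ffG_W c d (y j) (y k) (H2 j hjB k hk hjk) (H3 j hjB k hk hjk)
  have ein : eval (y k) (Nin c d y B T * Ein c d y B T)
      = ((c * y k - 1 * y k) * (y k - d * y k) * (d * y k - c * y k)) *
        ((∏ i ∈ T, ∏ j ∈ W, ff c d (y i) (y j)) *
         ((∏ i ∈ T, ((c * y k - y i) * (y k - d * y i) * (c * y i - d * y k))) *
          (∏ j ∈ W, ((c * y j - 1 * y k) * (y j - d * y k) * (d * y j - c * y k))))) := by
    rw [eval_mul, eval_Nin, eval_Ein, hkap, hBT,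
      Finset.prod_insert hWk, hBsplit (fun j => d * y j - c * y k), ← hA, ← hC]
    ring
  have eout : eval (y k) (Nout c d y B (insert k T) * Eout c d y B (insert k T))
      = ((y k - c * y k) * (d * y k - 1 * y k) * (c * y k - d * y k)) *
        ((∏ i ∈ T, ∏ j ∈ W, ff c d (y i) (y j)) *
         ((∏ i ∈ T, ((c * y k - y i) * (y k - d * y i) * (c * y i - d * y k))) *
          (∏ j ∈ W, ((c * y j - 1 * y k) * (y j - d * y k) * (d * y j - c * y k))))) := by
    rw [eval_mul, eval_Nout, eval_Eout, hkap', hBkT,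
      Finset.prod_insert hTk, hBsplit (fun j => c * y j - d * y k), ← hB2, ← hD]
    ring
  rw [ein, eout]
  ring

end E1
end Stmt2Aux

namespace Stmt2Aux
variable {F : Type*} [Field F] {ι : Type*} [DecidableEq ι]

lemma insert_inj_of_not_mem {k : ι} {T T' : Finset ι} (h1 : k ∉ T) (h2 : k ∉ T')
    (h : insert k T = insert k T') : T = T' := by
  rw [← Finset.erase_insert h1, ← Finset.erase_insert h2, h]

lemma eval_yk_Pone (c d : F) (y : ι → F) {B : Finset ι} {k : ι} (hk : k ∈ B)
    {n : ℕ} (hn : 1 ≤ n)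
    (H2 : ∀ i ∈ B, ∀ j ∈ B, i ≠ j → y i ≠ y j)
    (H3 : ∀ i ∈ B, ∀ j ∈ B, i ≠ j → c * y i ≠ d * y j) :
    eval (y k) (Pone c d y B n) = 0 := by
  classical
  obtain ⟨n', rfl⟩ : ∃ n', n = n' + 1 := ⟨n - 1, by omega⟩
  unfold Pone
  rw [show n' + 1 - 1 = n' by omega]
  rw [eval_add, eval_finset_sum, eval_finset_sum]
  have hin : ∑ T ∈ B.powersetCard n', eval (y k) (Nin c d y B T * Ein c d y B T)
      = ∑ T ∈ (B.erase k).powersetCard n', eval (y k) (Nin c d y B T * Ein c d y B T) := by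
    refine (Finset.sum_subset (powersetCard_mono (erase_subset k B)) ?_).symm
    intro T hT hT'
    obtain ⟨hTB, hTc⟩ := mem_powersetCard.mp hT
    have hkT : k ∈ T := by
      by_contra hkT
      exact hT' (mem_powersetCard.mpr ⟨fun x hx => mem_erase.mpr
        ⟨fun h => hkT (h ▸ hx), hTB hx⟩, hTc⟩)
    rw [eval_mul, eval_Ein]
    refine mul_eq_zero_of_right _ (mul_eq_zero_of_left ?_ _)
    exact Finset.prod_eq_zero hkT (by rw [one_mul, sub_self, zero_mul])
  have hsplitidx : B.powersetCard (n' + 1)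
      = (B.erase k).powersetCard (n' + 1)
        ∪ ((B.erase k).powersetCard n').image (insert k) := by
    conv_lhs => rw [← Finset.insert_erase hk]
    exact powersetCard_succ_insert (notMem_erase _ _) n'
  have hout : ∑ T ∈ B.powersetCard (n' + 1), eval (y k) (Nout c d y B T * Eout c d y B T)
      = ∑ T ∈ (B.erase k).powersetCard n',
          eval (y k) (Nout c d y B (insert k T) * Eout c d y B (insert k T)) := by
    rw [hsplitidx, Finset.sum_union (by
      rw [Finset.disjoint_left]
      intro T hT hT'
      obtain ⟨T', hT', rfl⟩ := Finset.mem_image.mp hT'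
      exact (notMem_erase k B) ((mem_powersetCard.mp hT).1 (mem_insert_self _ _)))]
    have h0 : ∑ T ∈ (B.erase k).powersetCard (n' + 1),
        eval (y k) (Nout c d y B T * Eout c d y B T) = 0 := by
      refine Finset.sum_eq_zero fun T hT => ?_
      obtain ⟨hTB, hTc⟩ := mem_powersetCard.mp hT
      have hkT : k ∈ B \ T := mem_sdiff.mpr ⟨hk, fun h => (notMem_erase k B) (hTB h)⟩
      rw [eval_mul, eval_Eout]
      refine mul_eq_zero_of_right _ (mul_eq_zero_of_left ?_ _)
      exact Finset.prod_eq_zero hkT (by rw [one_mul, sub_self, zero_mul])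
    rw [h0, zero_add]
    refine Finset.sum_image fun T hT T' hT' h => ?_
    exact insert_inj_of_not_mem
      (fun hh => (notMem_erase k B) ((mem_powersetCard.mp hT).1 hh))
      (fun hh => (notMem_erase k B) ((mem_powersetCard.mp hT').1 hh)) h
  rw [hin, hout, ← Finset.sum_add_distrib]
  refine Finset.sum_eq_zero fun T hT => ?_
  exact pair_cancel c d y hk (mem_powersetCard.mp hT).1 H2 H3

end Stmt2Aux

-- ===== from e.lean =====
open Finset Polynomial
set_option linter.unusedSectionVars false
set_option linter.unusedVariables false
set_option maxHeartbeats 2000000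

namespace Stmt2Aux
variable {F : Type*} [Field F] {ι : Type*} [DecidableEq ι]

lemma valU (c d yi yk : F) (hc : c ≠ 0) :
    (yi - c * (d / c * yk)) * (d * yi - 1 * (d / c * yk))
      = d / c * ((yi - d * yk) * (c * yi - yk)) := by
  field_simp

lemma valB (c d yj yk : F) (hc : c ≠ 0) :
    c * yj - d * (d / c * yk) = c⁻¹ * (c ^ 2 * yj - d ^ 2 * yk) := by
  field_simp

lemma ffα_W (c d yj yk : F) (hc : c ≠ 0) (h1 : yj ≠ yk) (h2 : c * yj ≠ d * yk) :
    ff c d yk yj * ((yj - 1 * (d / c * yk)) * (d * yj - c * (d / c * yk)))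
      = d / c * ((yj - d * yk) * (c * yj - yk)) := by
  unfold ff
  rw [div_mul_eq_mul_div, div_eq_iff
    (mul_ne_zero (sub_ne_zero.mpr h1) (sub_ne_zero.mpr h2))]
  field_simp

lemma ffα_T_dc (c d yi yk : F) (hc : c ≠ 0) (h1 : yk ≠ yi) (h2 : d * yk ≠ c * yi) :
    ff d c yi yk * ((yi - 1 * (d / c * yk)) * (d * yi - c * (d / c * yk)))
      = d / c * ((yi - d * yk) * (c * yi - yk)) := by
  unfold ff
  rw [div_mul_eq_mul_div, div_eq_iff
    (mul_ne_zero (sub_ne_zero.mpr h1) (sub_ne_zero.mpr h2))]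
  field_simp
  ring

lemma valW_dc (c d yj yk : F) (hc : c ≠ 0) :
    (d * yj - 1 * (d / c * yk)) * (yj - c * (d / c * yk))
      = d / c * ((yj - d * yk) * (c * yj - yk)) := by
  field_simp

noncomputable def Psi (c d : F) (y : ι → F) (B : Finset ι) (k : ι) : F :=
  (d / c) ^ B.card * (c⁻¹) ^ B.card * (∏ i ∈ B, ((y i - d * y k) * (c * y i - y k)))
    * ∏ j ∈ B, (c ^ 2 * y j - d ^ 2 * y k)

section E2
variable (c d : F) (y : ι → F) {B : Finset ι} {k : ι}

lemma out_term_eval (hc : c ≠ 0) (hk : k ∈ B) {T : Finset ι} (hT : T ⊆ B.erase k)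
    (H2 : ∀ i ∈ B, ∀ j ∈ B, i ≠ j → y i ≠ y j)
    (H3 : ∀ i ∈ B, ∀ j ∈ B, i ≠ j → c * y i ≠ d * y j) :
    eval (d / c * y k) (Nout c d y B (insert k T) * Eout c d y B (insert k T))
      = Psi c d y B k * ∏ i ∈ T, ∏ j ∈ (B.erase k) \ T, ff c d (y i) (y j) := by
  classical
  set B' := B.erase k with hB'
  set W := B' \ T with hW
  have hTk : k ∉ T := fun h => (notMem_erase k B) (hT h)
  have hWk : k ∉ W := fun h => (notMem_erase k B) (mem_sdiff.mp h).1
  have hTB : T ⊆ B := hT.trans (erase_subset _ _)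
  have memW : ∀ j ∈ W, j ∈ B ∧ j ≠ k := fun j hj =>
    ⟨(erase_subset _ _) (mem_sdiff.mp hj).1, ne_of_mem_erase (mem_sdiff.mp hj).1⟩
  have hBkT : B \ insert k T = W := by
    ext x
    by_cases hx : x = k
    · subst hx; simp [mem_sdiff, hW, hB']
    · simp [mem_sdiff, hW, hB', mem_erase, hx]
  have hBsplit : ∀ g : ι → F, ∏ j ∈ B, g j = g k * ((∏ j ∈ T, g j) * ∏ j ∈ W, g j) := by
    intro g
    rw [← Finset.insert_erase hk, Finset.prod_insert (notMem_erase _ _), ← hB']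
    congr 1
    rw [← Finset.prod_sdiff hT, ← hW, mul_comm]
  have hkap' : kap c d y B (insert k T)
      = (∏ j ∈ W, ff c d (y k) (y j)) * (∏ i ∈ T, ∏ j ∈ W, ff c d (y i) (y j)) := by
    unfold kap
    rw [hBkT, Finset.prod_insert hTk]
  have hcardU : (insert k T).card = T.card + 1 := card_insert_of_notMem hTk
  have hcardW : W.card = B'.card - T.card := card_sdiff_of_subset hT
  have hcardB' : B'.card = B.card - 1 := card_erase_of_mem hk
  have hTle : T.card ≤ B'.card := card_le_card hT
  have hBpos : 1 ≤ B.card := card_pos.mpr ⟨k, hk⟩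
  have hUval : ∏ i ∈ insert k T, ((y i - c * (d / c * y k)) * (d * y i - 1 * (d / c * y k)))
      = (d / c) ^ (insert k T).card * ∏ i ∈ insert k T, ((y i - d * y k) * (c * y i - y k)) := by
    rw [Finset.prod_congr rfl fun i _ => valU c d (y i) (y k) hc,
      Finset.prod_mul_distrib, Finset.prod_const]
  have hBval : ∏ j ∈ B, (c * y j - d * (d / c * y k))
      = (c⁻¹) ^ B.card * ∏ j ∈ B, (c ^ 2 * y j - d ^ 2 * y k) := by
    rw [Finset.prod_congr rfl fun j _ => valB c d (y j) (y k) hc,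
      Finset.prod_mul_distrib, Finset.prod_const]
  have hWval : (∏ j ∈ W, ff c d (y k) (y j)) *
      (∏ j ∈ W, ((y j - 1 * (d / c * y k)) * (d * y j - c * (d / c * y k))))
      = (d / c) ^ W.card * ∏ j ∈ W, ((y j - d * y k) * (c * y j - y k)) := by
    rw [← Finset.prod_mul_distrib,
      Finset.prod_congr rfl fun j hj => ffα_W c d (y j) (y k) hc
        (H2 j (memW j hj).1 k hk (memW j hj).2) (H3 j (memW j hj).1 k hk (memW j hj).2),
      Finset.prod_mul_distrib, Finset.prod_const]
  have hαmerge : (∏ i ∈ insert k T, ((y i - d * y k) * (c * y i - y k))) *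
      (∏ j ∈ W, ((y j - d * y k) * (c * y j - y k)))
      = ∏ i ∈ B, ((y i - d * y k) * (c * y i - y k)) := by
    rw [hBsplit (fun i => (y i - d * y k) * (c * y i - y k)), Finset.prod_insert hTk, mul_assoc]
  rw [eval_mul, eval_Nout, eval_Eout, hkap', hBkT, hUval, hBval]
  unfold Psi
  rw [show (d / c : F) ^ B.card = (d / c) ^ (insert k T).card * (d / c) ^ W.card by
    rw [← pow_add]; congr 1; omega]
  rw [← hαmerge]
  linear_combination ((∏ i ∈ T, ∏ j ∈ W, ff c d (y i) (y j)) * (d / c) ^ (insert k T).card *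
    (∏ i ∈ insert k T, ((y i - d * y k) * (c * y i - y k))) * (c⁻¹) ^ B.card *
    (∏ j ∈ B, (c ^ 2 * y j - d ^ 2 * y k))) * hWval

lemma in_term_eval_dc (hc : c ≠ 0) (hk : k ∈ B) {T : Finset ι} (hT : T ⊆ B.erase k)
    (H2 : ∀ i ∈ B, ∀ j ∈ B, i ≠ j → y i ≠ y j)
    (H3 : ∀ i ∈ B, ∀ j ∈ B, i ≠ j → c * y i ≠ d * y j) :
    eval (d / c * y k) (Nin d c y B T * Ein d c y B T)
      = Psi c d y B k * ∏ i ∈ T, ∏ j ∈ (B.erase k) \ T, ff d c (y i) (y j) := by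
  classical
  set B' := B.erase k with hB'
  set W := B' \ T with hW
  have hTk : k ∉ T := fun h => (notMem_erase k B) (hT h)
  have hWk : k ∉ W := fun h => (notMem_erase k B) (mem_sdiff.mp h).1
  have hTB : T ⊆ B := hT.trans (erase_subset _ _)
  have memT : ∀ i ∈ T, i ∈ B ∧ i ≠ k := fun i hi => ⟨hTB hi, ne_of_mem_erase (hT hi)⟩
  have hBT : B \ T = insert k W := by
    ext x
    by_cases hx : x = k
    · subst hx; simp [mem_sdiff, hk, hTk, hW, hB']
    · simp [mem_sdiff, hW, hB', mem_erase, hx]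
  have hBsplit : ∀ g : ι → F, ∏ j ∈ B, g j = g k * ((∏ j ∈ T, g j) * ∏ j ∈ W, g j) := by
    intro g
    rw [← Finset.insert_erase hk, Finset.prod_insert (notMem_erase _ _), ← hB']
    congr 1
    rw [← Finset.prod_sdiff hT, ← hW, mul_comm]
  have hkap : kap d c y B T
      = (∏ i ∈ T, ff d c (y i) (y k)) * (∏ i ∈ T, ∏ j ∈ W, ff d c (y i) (y j)) := by
    unfold kap
    rw [hBT, ← Finset.prod_mul_distrib]
    exact Finset.prod_congr rfl fun i hi => Finset.prod_insert hWk
  -- numerator product over B \ T = insert k W   (for Nin d c : pairs (d*y j - z)(y j - c*z))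
  have hNval : ∏ j ∈ insert k W, ((d * y j - 1 * (d / c * y k)) * (y j - c * (d / c * y k)))
      = (d / c) ^ (insert k W).card * ∏ j ∈ insert k W, ((y j - d * y k) * (c * y j - y k)) := by
    rw [Finset.prod_congr rfl fun j _ => valW_dc c d (y j) (y k) hc,
      Finset.prod_mul_distrib, Finset.prod_const]
  have hBval : ∏ j ∈ B, (c * y j - d * (d / c * y k))
      = (c⁻¹) ^ B.card * ∏ j ∈ B, (c ^ 2 * y j - d ^ 2 * y k) := by
    rw [Finset.prod_congr rfl fun j _ => valB c d (y j) (y k) hc,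
      Finset.prod_mul_distrib, Finset.prod_const]
  have hTval : (∏ i ∈ T, ff d c (y i) (y k)) *
      (∏ i ∈ T, ((y i - 1 * (d / c * y k)) * (d * y i - c * (d / c * y k))))
      = (d / c) ^ T.card * ∏ i ∈ T, ((y i - d * y k) * (c * y i - y k)) := by
    rw [← Finset.prod_mul_distrib,
      Finset.prod_congr rfl fun i hi => ffα_T_dc c d (y i) (y k) hc
        (H2 k hk i (memT i hi).1 (Ne.symm (memT i hi).2))
        (fun h => H3 i (memT i hi).1 k hk (memT i hi).2 h.symm),
      Finset.prod_mul_distrib, Finset.prod_const]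
  have hαmerge : (∏ i ∈ T, ((y i - d * y k) * (c * y i - y k))) *
      (∏ j ∈ insert k W, ((y j - d * y k) * (c * y j - y k)))
      = ∏ i ∈ B, ((y i - d * y k) * (c * y i - y k)) := by
    rw [hBsplit (fun i => (y i - d * y k) * (c * y i - y k)), Finset.prod_insert hWk]
    ring
  have hcardW : W.card = B'.card - T.card := card_sdiff_of_subset hT
  have hcardB' : B'.card = B.card - 1 := card_erase_of_mem hk
  have hTle : T.card ≤ B'.card := card_le_card hT
  have hBpos : 1 ≤ B.card := card_pos.mpr ⟨k, hk⟩
  have hcardiW : (insert k W).card = W.card + 1 := card_insert_of_notMem hWk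
  rw [eval_mul, eval_Nin, eval_Ein, hkap, hBT, hNval, hBval]
  unfold Psi
  rw [show (d / c : F) ^ B.card = (d / c) ^ T.card * (d / c) ^ (insert k W).card by
    rw [← pow_add]; congr 1; omega]
  rw [← hαmerge]
  linear_combination ((∏ i ∈ T, ∏ j ∈ W, ff d c (y i) (y j)) * (d / c) ^ (insert k W).card *
    (∏ j ∈ insert k W, ((y j - d * y k) * (c * y j - y k))) * (c⁻¹) ^ B.card *
    (∏ j ∈ B, (c ^ 2 * y j - d ^ 2 * y k))) * hTval

end E2
end Stmt2Aux

namespace Stmt2Aux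
variable {F : Type*} [Field F] {ι : Type*} [DecidableEq ι]

lemma dzero (c d yk : F) (hc : c ≠ 0) : d * yk - c * (d / c * yk) = 0 := by
  field_simp
  ring

lemma eval_r_Pone_cd (c d : F) (hc : c ≠ 0) (y : ι → F) {B : Finset ι} {k : ι} (hk : k ∈ B)
    {n : ℕ} (hn : 1 ≤ n)
    (H2 : ∀ i ∈ B, ∀ j ∈ B, i ≠ j → y i ≠ y j)
    (H3 : ∀ i ∈ B, ∀ j ∈ B, i ≠ j → c * y i ≠ d * y j) :
    eval (d / c * y k) (Pone c d y B n)
      = Psi c d y B k * Ssum c d y (B.erase k) (n - 1) := by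
  classical
  obtain ⟨n', rfl⟩ : ∃ n', n = n' + 1 := ⟨n - 1, by omega⟩
  unfold Pone
  rw [show n' + 1 - 1 = n' by omega]
  rw [eval_add, eval_finset_sum, eval_finset_sum]
  have hin0 : ∑ T ∈ B.powersetCard n',
      eval (d / c * y k) (Nin c d y B T * Ein c d y B T) = 0 := by
    refine Finset.sum_eq_zero fun T hT => ?_
    rw [eval_mul, eval_Ein]
    refine mul_eq_zero_of_right _ (mul_eq_zero_of_right _ ?_)
    exact Finset.prod_eq_zero hk (dzero c d (y k) hc)
  have hsplitidx : B.powersetCard (n' + 1)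
      = (B.erase k).powersetCard (n' + 1)
        ∪ ((B.erase k).powersetCard n').image (insert k) := by
    conv_lhs => rw [← Finset.insert_erase hk]
    exact powersetCard_succ_insert (notMem_erase _ _) n'
  have hout : ∑ T ∈ B.powersetCard (n' + 1),
      eval (d / c * y k) (Nout c d y B T * Eout c d y B T)
      = ∑ T ∈ (B.erase k).powersetCard n',
          eval (d / c * y k) (Nout c d y B (insert k T) * Eout c d y B (insert k T)) := by
    rw [hsplitidx, Finset.sum_union (by
      rw [Finset.disjoint_left]
      intro T hT hT'
      obtain ⟨T', hT', rfl⟩ := Finset.mem_image.mp hT'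
      exact (notMem_erase k B) ((mem_powersetCard.mp hT).1 (mem_insert_self _ _)))]
    have h0 : ∑ T ∈ (B.erase k).powersetCard (n' + 1),
        eval (d / c * y k) (Nout c d y B T * Eout c d y B T) = 0 := by
      refine Finset.sum_eq_zero fun T hT => ?_
      obtain ⟨hTB, hTc⟩ := mem_powersetCard.mp hT
      have hkT : k ∈ B \ T := mem_sdiff.mpr ⟨hk, fun h => (notMem_erase k B) (hTB h)⟩
      rw [eval_mul, eval_Eout]
      refine mul_eq_zero_of_right _ (mul_eq_zero_of_left ?_ _)
      exact Finset.prod_eq_zero hkT (mul_eq_zero_of_right _ (dzero c d (y k) hc))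
    rw [h0, zero_add]
    refine Finset.sum_image fun T hT T' hT' h => ?_
    exact insert_inj_of_not_mem
      (fun hh => (notMem_erase k B) ((mem_powersetCard.mp hT).1 hh))
      (fun hh => (notMem_erase k B) ((mem_powersetCard.mp hT').1 hh)) h
  rw [hin0, hout, zero_add]
  unfold Ssum
  rw [Finset.mul_sum]
  refine Finset.sum_congr rfl fun T hT => ?_
  exact out_term_eval c d y hc hk (mem_powersetCard.mp hT).1 H2 H3

lemma eval_r_Pone_dc (c d : F) (hc : c ≠ 0) (y : ι → F) {B : Finset ι} {k : ι} (hk : k ∈ B)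
    {n : ℕ} (hn : 1 ≤ n)
    (H2 : ∀ i ∈ B, ∀ j ∈ B, i ≠ j → y i ≠ y j)
    (H3 : ∀ i ∈ B, ∀ j ∈ B, i ≠ j → c * y i ≠ d * y j) :
    eval (d / c * y k) (Pone d c y B n)
      = Psi c d y B k * Ssum d c y (B.erase k) (n - 1) := by
  classical
  obtain ⟨n', rfl⟩ : ∃ n', n = n' + 1 := ⟨n - 1, by omega⟩
  unfold Pone
  rw [show n' + 1 - 1 = n' by omega]
  rw [eval_add, eval_finset_sum, eval_finset_sum]
  have hout0 : ∑ T ∈ B.powersetCard (n' + 1),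
      eval (d / c * y k) (Nout d c y B T * Eout d c y B T) = 0 := by
    refine Finset.sum_eq_zero fun T hT => ?_
    rw [eval_mul, eval_Eout]
    refine mul_eq_zero_of_right _ (mul_eq_zero_of_right _ ?_)
    exact Finset.prod_eq_zero hk (dzero c d (y k) hc)
  have hin : ∑ T ∈ B.powersetCard n',
      eval (d / c * y k) (Nin d c y B T * Ein d c y B T)
      = ∑ T ∈ (B.erase k).powersetCard n',
          eval (d / c * y k) (Nin d c y B T * Ein d c y B T) := by
    refine (Finset.sum_subset (powersetCard_mono (erase_subset k B)) ?_).symm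
    intro T hT hT'
    obtain ⟨hTB, hTc⟩ := mem_powersetCard.mp hT
    have hkT : k ∈ T := by
      by_contra hkT
      exact hT' (mem_powersetCard.mpr ⟨fun x hx => mem_erase.mpr
        ⟨fun h => hkT (h ▸ hx), hTB hx⟩, hTc⟩)
    rw [eval_mul, eval_Ein]
    refine mul_eq_zero_of_right _ (mul_eq_zero_of_left ?_ _)
    exact Finset.prod_eq_zero hkT (mul_eq_zero_of_right _ (dzero c d (y k) hc))
  rw [hout0, hin, add_zero]
  unfold Ssum
  rw [Finset.mul_sum]
  refine Finset.sum_congr rfl fun T hT => ?_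
  exact in_term_eval_dc c d y hc hk (mem_powersetCard.mp hT).1 H2 H3

end Stmt2Aux

-- ===== from f.lean =====
open Finset Polynomial
set_option linter.unusedSectionVars false
set_option linter.unusedVariables false
set_option maxHeartbeats 2000000

namespace Stmt2Aux
variable {F : Type*} [Field F] {ι : Type*} [DecidableEq ι]

lemma Ssum_zero (c d : F) (y : ι → F) (A : Finset ι) : Ssum c d y A 0 = 1 := by
  unfold Ssum
  rw [powersetCard_zero, Finset.sum_singleton, Finset.prod_empty]

lemma Ssum_card (c d : F) (y : ι → F) (A : Finset ι) : Ssum c d y A A.card = 1 := by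
  unfold Ssum
  rw [powersetCard_self, Finset.sum_singleton, sdiff_self]
  simp

lemma Ssum_of_lt (c d : F) (y : ι → F) {A : Finset ι} {n : ℕ} (h : A.card < n) :
    Ssum c d y A n = 0 := by
  unfold Ssum
  rw [Finset.powersetCard_eq_empty.mpr h, Finset.sum_empty]

theorem core (c d : F) (hc : c ≠ 0) (hd : d ≠ 0) (y : ι → F) :
    ∀ (N : ℕ) (A : Finset ι), A.card ≤ N →
      (∀ i ∈ A, ∀ j ∈ A, i ≠ j → y i ≠ y j) →
      (∀ i ∈ A, ∀ j ∈ A, c * y i ≠ d * y j) →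
      (∀ i ∈ A, ∀ j ∈ A, c ^ 2 * y i ≠ d ^ 2 * y j) →
      ∀ n : ℕ, Ssum c d y A n = Ssum d c y A n := by
  intro N
  induction N with
  | zero =>
    intro A hA H2 H3 H4 n
    have hA0 : A.card = 0 := by omega
    rcases Nat.eq_zero_or_pos n with rfl | hn
    · rw [Ssum_zero, Ssum_zero]
    · rw [Ssum_of_lt c d y (by omega), Ssum_of_lt d c y (by omega)]
  | succ N IH =>
    intro A hA H2 H3 H4 n
    by_cases hAN : A.card ≤ N
    · exact IH A hAN H2 H3 H4 n
    have hAcard : A.card = N + 1 := by omega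
    -- trivial boundary cases in n
    rcases Nat.eq_zero_or_pos n with rfl | hn1
    · rw [Ssum_zero, Ssum_zero]
    by_cases hncard : A.card ≤ n
    · rcases eq_or_lt_of_le hncard with heq | hlt
      · rw [← heq, Ssum_card, Ssum_card]
      · rw [Ssum_of_lt c d y hlt, Ssum_of_lt d c y hlt]
    push_neg at hncard
    classical
    -- main case : 1 ≤ n < A.card
    obtain ⟨μ, hμA⟩ := Finset.card_pos.mp (show 0 < A.card by omega)
    set B := A.erase μ with hB
    have hμB : μ ∉ B := notMem_erase _ _
    have hins : insert μ B = A := insert_erase hμA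
    have hBsub : B ⊆ A := erase_subset _ _
    have hBcard : B.card = A.card - 1 := card_erase_of_mem hμA
    have H2B : ∀ i ∈ B, ∀ j ∈ B, i ≠ j → y i ≠ y j :=
      fun i hi j hj => H2 i (hBsub hi) j (hBsub hj)
    have H3Bf : ∀ i ∈ B, ∀ j ∈ B, c * y i ≠ d * y j :=
      fun i hi j hj => H3 i (hBsub hi) j (hBsub hj)
    have H4Bf : ∀ i ∈ B, ∀ j ∈ B, c ^ 2 * y i ≠ d ^ 2 * y j :=
      fun i hi j hj => H4 i (hBsub hi) j (hBsub hj)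
    have H3B : ∀ i ∈ B, ∀ j ∈ B, i ≠ j → c * y i ≠ d * y j :=
      fun i hi j hj _ => H3Bf i hi j hj
    have H3Bdc : ∀ i ∈ B, ∀ j ∈ B, i ≠ j → d * y i ≠ c * y j :=
      fun i hi j hj _ h => H3Bf j hj i hi h.symm
    -- the polynomial difference is zero
    have hPone_deg : ∀ (c' d' : F), (Pone c' d' y B n).natDegree ≤ 3 * B.card := by
      intro c' d'
      unfold Pone
      refine (natDegree_add_le _ _).trans (max_le ?_ ?_)
      · exact natDegree_sum_le_of_forall_le _ _ fun T hT =>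
          NEin_deg c' d' y (mem_powersetCard.mp hT).1
      · exact natDegree_sum_le_of_forall_le _ _ fun T hT =>
          NEout_deg c' d' y (mem_powersetCard.mp hT).1
    have hcoeff : (Pone c d y B n - Pone d c y B n).coeff (3 * B.card) = 0 := by
      have hIH := fun m => IH B (by omega) H2B H3Bf H4Bf m
      have hco : ∀ (c' d' : F), (Pone c' d' y B n).coeff (3 * B.card)
          = (-(c' * d')) ^ B.card * (Ssum c' d' y B (n - 1) + Ssum c' d' y B n) := by
        intro c' d'
        unfold Pone
        rw [coeff_add, finset_sum_coeff, finset_sum_coeff]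
        rw [Finset.sum_congr rfl fun T hT => NEin_coeff c' d' y (mem_powersetCard.mp hT).1,
            Finset.sum_congr rfl fun T hT => NEout_coeff c' d' y (mem_powersetCard.mp hT).1]
        unfold Ssum kap
        rw [← Finset.sum_mul, ← Finset.sum_mul]
        ring
      rw [coeff_sub, hco c d, hco d c, hIH (n-1), hIH n, mul_comm d c]
      ring
    set P : Polynomial F := Pone c d y B n - Pone d c y B n with hPdef
    have hPdeg : P.natDegree ≤ 3 * B.card :=
      (natDegree_sub_le _ _).trans (max_le (hPone_deg c d) (hPone_deg d c))
    -- roots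
    have hroot1 : ∀ k ∈ B, eval (y k) P = 0 := by
      intro k hk
      rw [hPdef, eval_sub,
        eval_yk_Pone c d y hk hn1 H2B H3B,
        eval_yk_Pone d c y hk hn1 H2B H3Bdc, sub_zero]
    have hroot2 : ∀ k ∈ B, eval (d / c * y k) P = 0 := by
      intro k hk
      have hIH := IH (B.erase k) (by
          have := card_erase_of_mem hk; omega)
        (fun i hi j hj => H2B i (erase_subset _ _ hi) j (erase_subset _ _ hj))
        (fun i hi j hj => H3Bf i (erase_subset _ _ hi) j (erase_subset _ _ hj))
        (fun i hi j hj => H4Bf i (erase_subset _ _ hi) j (erase_subset _ _ hj))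
        (n - 1)
      rw [hPdef, eval_sub,
        eval_r_Pone_cd c d hc y hk hn1 H2B H3B,
        eval_r_Pone_dc c d hc y hk hn1 H2B H3B, hIH, sub_self]
    have hroot3 : ∀ k ∈ B, eval (c / d * y k) P = 0 := by
      intro k hk
      have hIH := IH (B.erase k) (by
          have := card_erase_of_mem hk; omega)
        (fun i hi j hj => H2B i (erase_subset _ _ hi) j (erase_subset _ _ hj))
        (fun i hi j hj => H3Bf i (erase_subset _ _ hi) j (erase_subset _ _ hj))
        (fun i hi j hj => H4Bf i (erase_subset _ _ hi) j (erase_subset _ _ hj))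
        (n - 1)
      rw [hPdef, eval_sub,
        eval_r_Pone_dc d c hd y hk hn1 H2B H3Bdc,
        eval_r_Pone_cd d c hd y hk hn1 H2B H3Bdc, hIH, sub_self]
    -- P has too many roots, hence P = 0
    have hPzero : P = 0 := by
      by_contra hP0
      have hdeglt : P.natDegree < 3 * B.card := by
        rcases lt_or_eq_of_le hPdeg with h | h
        · exact h
        · exfalso
          have hlc := leadingCoeff_ne_zero.mpr hP0
          rw [leadingCoeff, h] at hlc
          exact hlc hcoeff
      have hdc : (d / c : F) ≠ 0 := div_ne_zero hd hc
      have hcd : (c / d : F) ≠ 0 := div_ne_zero hc hd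
      have hyinj : Set.InjOn (fun j => y j) B := by
        intro i hi j hj h
        by_contra hne
        exact H2 i (hBsub hi) j (hBsub hj) hne h
      set R : Finset F := (B.image fun j => y j) ∪
        ((B.image fun j => d / c * y j) ∪ (B.image fun j => c / d * y j)) with hR
      have hRsub : R ⊆ P.roots.toFinset := by
        intro r hr
        rw [Multiset.mem_toFinset, mem_roots']
        refine ⟨hP0, ?_⟩
        simp only [hR, mem_union, mem_image] at hr
        rcases hr with ⟨k, hk, rfl⟩ | ⟨k, hk, rfl⟩ | ⟨k, hk, rfl⟩
        · exact hroot1 k hk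
        · exact hroot2 k hk
        · exact hroot3 k hk
      have hd12 : Disjoint (B.image fun j => d / c * y j) (B.image fun j => c / d * y j) := by
        rw [Finset.disjoint_left]
        rintro r hr1 hr2
        obtain ⟨i, hi, rfl⟩ := Finset.mem_image.mp hr1
        obtain ⟨j, hj, hji⟩ := Finset.mem_image.mp hr2
        have : c ^ 2 * y j = d ^ 2 * y i := by
          field_simp at hji
          linear_combination hji
        exact H4 j (hBsub hj) i (hBsub hi) this
      have hd01 : Disjoint (B.image fun j => y j)
          ((B.image fun j => d / c * y j) ∪ (B.image fun j => c / d * y j)) := by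
        rw [Finset.disjoint_left]
        rintro r hr0 hr12
        obtain ⟨j, hj, rfl⟩ := Finset.mem_image.mp hr0
        rcases Finset.mem_union.mp hr12 with hr1 | hr2
        · obtain ⟨i, hi, hij⟩ := Finset.mem_image.mp hr1
          have : c * y j = d * y i := by
            field_simp at hij
            linear_combination -hij
          exact H3 j (hBsub hj) i (hBsub hi) this
        · obtain ⟨i, hi, hij⟩ := Finset.mem_image.mp hr2
          have : c * y i = d * y j := by
            field_simp at hij
            linear_combination hij
          exact H3 i (hBsub hi) j (hBsub hj) this
      have hRcard : R.card = 3 * B.card := by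
        rw [hR, Finset.card_union_of_disjoint hd01, Finset.card_union_of_disjoint hd12,
          Finset.card_image_of_injOn hyinj,
          Finset.card_image_of_injOn (fun i hi j hj h => hyinj hi hj
            (mul_left_cancel₀ hdc h)),
          Finset.card_image_of_injOn (fun i hi j hj h => hyinj hi hj
            (mul_left_cancel₀ hcd h))]
        ring
      have hle : R.card ≤ P.natDegree :=
        le_trans (Finset.card_le_card hRsub)
          (le_trans (Multiset.toFinset_card_le _) (Polynomial.card_roots' P))
      omega
    -- now cancel the nonzero factor
    have h2μ : ∀ j ∈ B, y j ≠ y μ := fun j hj => H2 j (hBsub hj) μ hμA (ne_of_mem_erase hj)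
    have h3μ : ∀ j ∈ B, c * y j ≠ d * y μ := fun j hj => H3 j (hBsub hj) μ hμA
    have h3cμ : ∀ j ∈ B, c * y μ ≠ d * y j := fun j hj => H3 μ hμA j (hBsub hj)
    have h3dμ : ∀ j ∈ B, d * y j ≠ c * y μ := fun j hj h => H3 μ hμA j (hBsub hj) h.symm
    have h3dcμ : ∀ j ∈ B, d * y μ ≠ c * y j := fun j hj h => H3 j (hBsub hj) μ hμA h.symm
    have hQ1 : eval (y μ) (QB c d y B) ≠ 0 := eval_QB_ne_zero c d y h2μ h3μ h3dμ
    have hk1 := key_split c d y hμB hn1 h2μ h3μ h3cμ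
    have hk2 := key_split d c y hμB hn1 h2μ h3dμ h3dcμ
    rw [hins] at hk1 hk2
    rw [← QB_comm c d y B] at hk2
    have hPP : Pone c d y B n = Pone d c y B n := by
      have := sub_eq_zero.mp hPzero
      exact this
    refine mul_right_cancel₀ hQ1 ?_
    rw [hk1, hk2, hPP]

end Stmt2Aux

-- ===== from g.lean =====
open Finset Polynomial
set_option linter.unusedSectionVars false
set_option linter.unusedVariables false
set_option maxHeartbeats 1000000

namespace Stmt2Aux
variable {ι : Type*} [DecidableEq ι]

section ring
variable {K : Type*} [CommRing K]

noncomputable def pnum (c d : K) (y : ι → K) (A S : Finset ι) : K :=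
  ∏ i ∈ S, ∏ j ∈ A \ S, ((c * y j - y i) * (y j - d * y i))

noncomputable def pcof (c d : K) (y : ι → K) (A S : Finset ι) : K :=
  ∏ p ∈ A.offDiag.filter (fun p => ¬(p.1 ∈ S ∧ p.2 ∉ S)),
    ((y p.2 - y p.1) * (c * y p.2 - d * y p.1))

noncomputable def pden (c d : K) (y : ι → K) (A S : Finset ι) : K :=
  ∏ p ∈ A.offDiag.filter (fun p => p.1 ∈ S ∧ p.2 ∉ S),
    ((y p.2 - y p.1) * (c * y p.2 - d * y p.1))

noncomputable def Dfull (c d : K) (y : ι → K) (A : Finset ι) : K :=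
  ∏ p ∈ A.offDiag, ((y p.2 - y p.1) * (c * y p.2 - d * y p.1))

noncomputable def bigSum (c d : K) (y : ι → K) (A : Finset ι) (n : ℕ) : K :=
  ∑ S ∈ A.powersetCard n, pnum c d y A S * pcof c d y A S

lemma map_bigSum {L : Type*} [CommRing L] (φ : K →+* L) (c d : K) (y : ι → K)
    (A : Finset ι) (n : ℕ) :
    φ (bigSum c d y A n) = bigSum (φ c) (φ d) (fun i => φ (y i)) A n := by
  unfold bigSum pnum pcof
  rw [map_sum]
  refine Finset.sum_congr rfl fun S hS => ?_
  rw [map_mul, map_prod, map_prod]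
  congr 1
  · refine Finset.prod_congr rfl fun i hi => ?_
    rw [map_prod]
    exact Finset.prod_congr rfl fun j hj => by push_cast [map_mul, map_sub]; ring
  · exact Finset.prod_congr rfl fun p hp => by push_cast [map_mul, map_sub]; ring

end ring

section field
variable {F : Type*} [Field F]

lemma filter_offDiag_eq (A S : Finset ι) (hS : S ⊆ A) :
    A.offDiag.filter (fun p => p.1 ∈ S ∧ p.2 ∉ S) = S ×ˢ (A \ S) := by
  ext ⟨i, j⟩
  simp only [mem_filter, mem_offDiag, mem_product, mem_sdiff]
  constructor
  · rintro ⟨⟨hiA, hjA, hij⟩, hiS, hjS⟩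
    exact ⟨hiS, hjA, hjS⟩
  · rintro ⟨hiS, hjA, hjS⟩
    exact ⟨⟨hS hiS, hjA, fun h => hjS (h ▸ hiS)⟩, hiS, hjS⟩

lemma Ssum_mul_Dfull (c d : F) (y : ι → F) (A : Finset ι)
    (hden : ∀ i ∈ A, ∀ j ∈ A, i ≠ j → (y j - y i) ≠ 0 ∧ (c * y j - d * y i) ≠ 0)
    (n : ℕ) :
    Ssum c d y A n * Dfull c d y A = bigSum c d y A n := by
  unfold Ssum bigSum
  rw [Finset.sum_mul]
  refine Finset.sum_congr rfl fun S hS => ?_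
  obtain ⟨hSA, hSc⟩ := mem_powersetCard.mp hS
  have hfd := filter_offDiag_eq A S hSA
  have hDsplit : Dfull c d y A = pden c d y A S * pcof c d y A S := by
    unfold Dfull pden pcof
    exact (Finset.prod_filter_mul_prod_filter_not _ _ _).symm
  have hpden_ne : pden c d y A S ≠ 0 := by
    unfold pden
    refine Finset.prod_ne_zero_iff.mpr fun p hp => ?_
    rw [mem_filter, mem_offDiag] at hp
    obtain ⟨⟨hp1, hp2, hp3⟩, _, _⟩ := hp
    exact mul_ne_zero (hden p.1 hp1 p.2 hp2 hp3).1 (hden p.1 hp1 p.2 hp2 hp3).2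
  have hterm : (∏ i ∈ S, ∏ j ∈ A \ S, ff c d (y i) (y j))
      = pnum c d y A S / pden c d y A S := by
    unfold pnum pden ff
    rw [hfd, Finset.prod_product, ← Finset.prod_div_distrib]
    refine Finset.prod_congr rfl fun i hi => ?_
    rw [← Finset.prod_div_distrib]
  rw [hterm, hDsplit, div_mul_eq_mul_div, mul_comm (pden c d y A S) (pcof c d y A S),
    ← mul_assoc, mul_div_assoc, div_self hpden_ne, mul_one]

lemma Dfull_ne_zero (c d : F) (y : ι → F) (A : Finset ι)
    (hden : ∀ i ∈ A, ∀ j ∈ A, i ≠ j → (y j - y i) ≠ 0 ∧ (c * y j - d * y i) ≠ 0) :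
    Dfull c d y A ≠ 0 := by
  unfold Dfull
  refine Finset.prod_ne_zero_iff.mpr fun p hp => ?_
  rw [mem_offDiag] at hp
  exact mul_ne_zero (hden p.1 hp.1 p.2 hp.2.1 hp.2.2).1 (hden p.1 hp.1 p.2 hp.2.1 hp.2.2).2

end field
end Stmt2Aux

-- ===== from h.lean =====
open Finset Polynomial
set_option linter.unusedSectionVars false
set_option linter.unusedVariables false
set_option maxHeartbeats 1000000

namespace Stmt2Aux

lemma nat_25 (i j : ℕ) : (2 : ℕ) * 5 ^ i ≠ 3 * 5 ^ j := by
  intro h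
  have h3 : (3 : ℕ) ∣ 2 * 5 ^ i := h ▸ Dvd.intro _ rfl
  rcases (Nat.Prime.dvd_mul (by norm_num)).mp h3 with h' | h'
  · norm_num at h'
  · have := Nat.Prime.dvd_of_dvd_pow (p := 3) (by norm_num) h'
    norm_num at this

lemma nat_49 (i j : ℕ) : (4 : ℕ) * 5 ^ i ≠ 9 * 5 ^ j := by
  intro h
  have h3 : (3 : ℕ) ∣ 4 * 5 ^ i := h ▸ (by
    have : (3 : ℕ) ∣ 9 := by norm_num
    exact Dvd.dvd.mul_right this _)
  rcases (Nat.Prime.dvd_mul (by norm_num)).mp h3 with h' | h'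
  · norm_num at h'
  · have := Nat.Prime.dvd_of_dvd_pow (p := 3) (by norm_num) h'
    norm_num at this

lemma nat_55 {i j : ℕ} (h : i ≠ j) : (5 : ℕ) ^ i ≠ 5 ^ j :=
  fun hh => h (Nat.pow_right_injective (by norm_num) hh)

lemma rat_25 (i j : ℕ) : (2 : ℚ) * 5 ^ i ≠ 3 * 5 ^ j := by
  intro h
  apply nat_25 i j
  exact_mod_cast h

lemma rat_49 (i j : ℕ) : (4 : ℚ) * 5 ^ i ≠ 9 * 5 ^ j := by
  intro h
  apply nat_49 i j
  exact_mod_cast h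

lemma rat_55 {i j : ℕ} (h : i ≠ j) : (5 : ℚ) ^ i ≠ 5 ^ j := by
  intro hh
  apply nat_55 h
  exact_mod_cast hh


abbrev Rgen (m : ℕ) : Type := MvPolynomial (Fin m ⊕ Bool) ℚ

noncomputable def psig {m : ℕ} : Rgen m →+* ℚ :=
  MvPolynomial.eval (Sum.elim (fun i : Fin m => (5 : ℚ) ^ (i : ℕ))
    (fun bb => if bb then 3 else 2))

@[simp] lemma psig_a {m : ℕ} : psig (m := m) (MvPolynomial.X (Sum.inr false)) = 2 := by
  simp [psig]

@[simp] lemma psig_b {m : ℕ} : psig (m := m) (MvPolynomial.X (Sum.inr true)) = 3 := by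
  simp [psig]

@[simp] lemma psig_y {m : ℕ} (i : Fin m) :
    psig (m := m) (MvPolynomial.X (Sum.inl i)) = (5 : ℚ) ^ (i : ℕ) := by
  simp [psig]

noncomputable def chig {m : ℕ} (a b : ℂ) (Y : Fin m → ℂ) : Rgen m →+* ℂ :=
  MvPolynomial.eval₂Hom (algebraMap ℚ ℂ)
    (Sum.elim Y (fun bb => if bb then b else a))

@[simp] lemma chig_a {m : ℕ} (a b : ℂ) (Y : Fin m → ℂ) :
    chig a b Y (MvPolynomial.X (Sum.inr false)) = a := by
  simp [chig]

@[simp] lemma chig_b {m : ℕ} (a b : ℂ) (Y : Fin m → ℂ) :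
    chig a b Y (MvPolynomial.X (Sum.inr true)) = b := by
  simp [chig]

@[simp] lemma chig_y {m : ℕ} (a b : ℂ) (Y : Fin m → ℂ) (i : Fin m) :
    chig a b Y (MvPolynomial.X (Sum.inl i)) = Y i := by
  simp [chig]

/-- The main symmetry, for `ℂ`-values satisfying the nondegeneracy conditions coming
from the genericity hypothesis. -/
lemma Ssum_symm_C {m : ℕ} (a b : ℂ) (Y : Fin m → ℂ)
    (hden1 : ∀ i j : Fin m, i ≠ j → (Y j - Y i) ≠ 0)
    (hden2 : ∀ i j : Fin m, i ≠ j → (a * Y j - b * Y i) ≠ 0)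
    (hden3 : ∀ i j : Fin m, i ≠ j → (b * Y j - a * Y i) ≠ 0)
    (n : ℕ) :
    Ssum a b Y (univ : Finset (Fin m)) n = Ssum b a Y univ n := by
  classical
  set φ : Rgen m →+* FractionRing (Rgen m) := (algebraMap (Rgen m) (FractionRing (Rgen m))) with hphi
  have hφ : Function.Injective φ := IsFractionRing.injective (Rgen m) (FractionRing (Rgen m))
  set aR : Rgen m := MvPolynomial.X (Sum.inr false) with haR
  set bR : Rgen m := MvPolynomial.X (Sum.inr true) with hbR
  set yR : Fin m → Rgen m := fun i => MvPolynomial.X (Sum.inl i) with hyR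
  set ψ : Rgen m →+* ℚ := psig with hpsi
  have hψa : ψ aR = 2 := psig_a
  have hψb : ψ bR = 3 := psig_b
  have hψy : ∀ i, ψ (yR i) = (5 : ℚ) ^ (i : ℕ) := fun i => psig_y i
  set aF := φ aR with haF'
  set bF := φ bR with hbF'
  set yF : Fin m → FractionRing (Rgen m) := fun i => φ (yR i) with hyF'
  have haF : aF ≠ 0 := by
    intro h
    have h0 : ψ aR = ψ 0 := congrArg ψ (hφ (h.trans (map_zero φ).symm))
    rw [hψa, map_zero] at h0; norm_num at h0
  have hbF : bF ≠ 0 := by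
    intro h
    have h0 : ψ bR = ψ 0 := congrArg ψ (hφ (h.trans (map_zero φ).symm))
    rw [hψb, map_zero] at h0; norm_num at h0
  have H2F : ∀ i ∈ (univ : Finset (Fin m)), ∀ j ∈ univ, i ≠ j → yF i ≠ yF j := by
    intro i _ j _ hij h
    have := congrArg ψ (hφ h)
    rw [hψy, hψy] at this
    exact rat_55 (fun hh => hij (Fin.val_injective hh)) this
  have H3F : ∀ i ∈ (univ : Finset (Fin m)), ∀ j ∈ univ, aF * yF i ≠ bF * yF j := by
    intro i _ j _ h
    rw [← map_mul, ← map_mul] at h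
    have := congrArg ψ (hφ h)
    rw [map_mul, map_mul, hψa, hψb, hψy, hψy] at this
    exact rat_25 _ _ this
  have H4F : ∀ i ∈ (univ : Finset (Fin m)), ∀ j ∈ univ, aF ^ 2 * yF i ≠ bF ^ 2 * yF j := by
    intro i _ j _ h
    rw [show aF ^ 2 * yF i = φ (aR ^ 2 * yR i) by rw [map_mul, map_pow],
        show bF ^ 2 * yF j = φ (bR ^ 2 * yR j) by rw [map_mul, map_pow]] at h
    have := congrArg ψ (hφ h)
    rw [map_mul, map_mul, map_pow, map_pow, hψa, hψb, hψy, hψy] at this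
    have h49 := rat_49 (i : ℕ) (j : ℕ)
    rw [show (2:ℚ)^2 = 4 by norm_num, show (3:ℚ)^2 = 9 by norm_num] at this
    exact h49 this
  -- symmetry in the generic field
  have hsymF : Ssum aF bF yF univ n = Ssum bF aF yF univ n :=
    core aF bF haF hbF yF (card univ) univ le_rfl H2F H3F H4F n
  -- clear denominators in FF
  have hdenF : ∀ i ∈ (univ : Finset (Fin m)), ∀ j ∈ univ, i ≠ j →
      (yF j - yF i) ≠ 0 ∧ (aF * yF j - bF * yF i) ≠ 0 := by
    intro i hi j hj hij
    exact ⟨sub_ne_zero.mpr fun h => H2F j hj i hi (Ne.symm hij) h,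
      sub_ne_zero.mpr fun h => H3F j hj i hi h⟩
  have hdenF' : ∀ i ∈ (univ : Finset (Fin m)), ∀ j ∈ univ, i ≠ j →
      (yF j - yF i) ≠ 0 ∧ (bF * yF j - aF * yF i) ≠ 0 := by
    intro i hi j hj hij
    exact ⟨sub_ne_zero.mpr fun h => H2F j hj i hi (Ne.symm hij) h,
      sub_ne_zero.mpr fun h => H3F i hi j hj h.symm⟩
  have hFid : bigSum aF bF yF univ n * Dfull bF aF yF univ
      = bigSum bF aF yF univ n * Dfull aF bF yF univ := by
    rw [← Ssum_mul_Dfull aF bF yF univ hdenF n, ← Ssum_mul_Dfull bF aF yF univ hdenF' n,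
      hsymF]
    ring
  -- descend to R
  have hmapD : ∀ (c e : Rgen m), φ (Dfull c e yR univ) = Dfull (φ c) (φ e) yF univ := by
    intro c e
    unfold Dfull
    rw [map_prod]
    exact Finset.prod_congr rfl fun p hp => by rw [map_mul, map_sub, map_sub, map_mul, map_mul]
  have hRid : bigSum aR bR yR univ n * Dfull bR aR yR univ
      = bigSum bR aR yR univ n * Dfull aR bR yR univ := by
    apply hφ
    rw [map_mul, map_mul, map_bigSum, map_bigSum, hmapD, hmapD]
    exact hFid
  -- map to ℂ
  set χ : Rgen m →+* ℂ := chig a b Y with hchi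
  have hχa : χ aR = a := chig_a a b Y
  have hχb : χ bR = b := chig_b a b Y
  have hχy : ∀ i, χ (yR i) = Y i := fun i => chig_y a b Y i
  have hχyfun : (fun i => χ (yR i)) = Y := funext hχy
  have hmapDC : ∀ (c e : Rgen m), χ (Dfull c e yR univ) = Dfull (χ c) (χ e) Y univ := by
    intro c e
    unfold Dfull
    rw [map_prod]
    refine Finset.prod_congr rfl fun p hp => ?_
    rw [map_mul, map_sub, map_sub, map_mul, map_mul, hχy, hχy]
  have hCid : bigSum a b Y univ n * Dfull b a Y univ
      = bigSum b a Y univ n * Dfull a b Y univ := by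
    have := congrArg χ hRid
    rw [map_mul, map_mul, map_bigSum, map_bigSum, hmapDC, hmapDC, hχa, hχb, hχyfun] at this
    exact this
  -- finish in ℂ
  have hdenC : ∀ i ∈ (univ : Finset (Fin m)), ∀ j ∈ univ, i ≠ j →
      (Y j - Y i) ≠ 0 ∧ (a * Y j - b * Y i) ≠ 0 :=
    fun i _ j _ hij => ⟨hden1 i j hij, hden2 i j hij⟩
  have hdenC' : ∀ i ∈ (univ : Finset (Fin m)), ∀ j ∈ univ, i ≠ j →
      (Y j - Y i) ≠ 0 ∧ (b * Y j - a * Y i) ≠ 0 :=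
    fun i _ j _ hij => ⟨hden1 i j hij, hden3 i j hij⟩
  have hD1 : Dfull a b Y (univ : Finset (Fin m)) ≠ 0 := Dfull_ne_zero a b Y univ hdenC
  have hD2 : Dfull b a Y (univ : Finset (Fin m)) ≠ 0 := Dfull_ne_zero b a Y univ hdenC'
  have hfin : Ssum a b Y (univ : Finset (Fin m)) n * (Dfull a b Y univ * Dfull b a Y univ)
      = Ssum b a Y univ n * (Dfull a b Y univ * Dfull b a Y univ) := by
    calc Ssum a b Y (univ : Finset (Fin m)) n * (Dfull a b Y univ * Dfull b a Y univ)
        = (Ssum a b Y univ n * Dfull a b Y univ) * Dfull b a Y univ := by ring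
      _ = bigSum a b Y univ n * Dfull b a Y univ := by
          rw [Ssum_mul_Dfull a b Y univ hdenC n]
      _ = bigSum b a Y univ n * Dfull a b Y univ := hCid
      _ = (Ssum b a Y univ n * Dfull b a Y univ) * Dfull a b Y univ := by
          rw [Ssum_mul_Dfull b a Y univ hdenC' n]
      _ = Ssum b a Y univ n * (Dfull a b Y univ * Dfull b a Y univ) := by ring
  exact mul_right_cancel₀ (mul_ne_zero hD1 hD2) hfin

end Stmt2Aux

-- ===== from i.lean =====
open Finset
set_option linter.unusedSectionVars false
set_option linter.unusedVariables false
set_option maxHeartbeats 1000000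

/-- `η^{(+,+)}(q,t;ξ)`. -/
noncomputable def etaPP (q t ξ : ℂ) : ℂ := (q * ξ⁻¹ - q⁻¹ * ξ) / (ξ⁻¹ - ξ)

/-- `η^{(-,+)}(q,t;ξ)`. -/
noncomputable def etaMP (q t ξ : ℂ) : ℂ :=
  (q * t⁻¹ * ξ⁻¹ - q⁻¹ * t * ξ) / (t⁻¹ * ξ⁻¹ - t * ξ)

/-- The coefficients `γ_ε(q,t)` of Theorem 3.1 of the paper, with `ξ_{ij} = x_i / x_j`;
`true` encodes sign `+1` and `false` encodes sign `-1`. -/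
noncomputable def gammaCoeff {m : ℕ} (q t : ℂ) (x : Fin m → ℂ) (ε : Fin m → Bool) : ℂ :=
  ∏ i ∈ univ.filter (fun i => ε i = false), ∏ j ∈ univ.filter (fun j => ε j = true),
    etaPP q t (x i / x j) / etaMP q t (x i / x j)

namespace Stmt2Aux

lemma eta_ratio (q t xi xj : ℂ) (hxi : xi ≠ 0) (hxj : xj ≠ 0) (hq : q ≠ 0) (ht : t ≠ 0)
    (h1 : xi ^ 2 ≠ xj ^ 2) (h2 : t ^ 2 * xi ^ 2 ≠ xj ^ 2) (h3 : q ^ 2 * xj ^ 2 ≠ t ^ 2 * xi ^ 2) :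
    etaPP q t (xi / xj) / etaMP q t (xi / xj) = ff (q ^ 2) (t ^ 2) (xi ^ 2) (xj ^ 2) := by
  have h1' : xj ^ 2 - xi ^ 2 ≠ 0 := sub_ne_zero.mpr fun h => h1 h.symm
  have h2' : xj ^ 2 - t ^ 2 * xi ^ 2 ≠ 0 := sub_ne_zero.mpr fun h => h2 h.symm
  have h3' : q ^ 2 * xj ^ 2 - t ^ 2 * xi ^ 2 ≠ 0 := sub_ne_zero.mpr h3
  have hA : (xi / xj)⁻¹ - xi / xj = (xj ^ 2 - xi ^ 2) / (xi * xj) := by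
    rw [inv_div]; field_simp
  have hB : q * (xi / xj)⁻¹ - q⁻¹ * (xi / xj) = (q ^ 2 * xj ^ 2 - xi ^ 2) / (q * xi * xj) := by
    rw [inv_div]; field_simp
  have hC : q * t⁻¹ * (xi / xj)⁻¹ - q⁻¹ * t * (xi / xj)
      = (q ^ 2 * xj ^ 2 - t ^ 2 * xi ^ 2) / (q * t * xi * xj) := by
    rw [inv_div]; field_simp
  have hD : t⁻¹ * (xi / xj)⁻¹ - t * (xi / xj) = (xj ^ 2 - t ^ 2 * xi ^ 2) / (t * xi * xj) := by
    rw [inv_div]; field_simp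
  have hq' : (q * xi * xj) / (xi * xj) = q := by field_simp
  have hqt' : (q * t * xi * xj) / (t * xi * xj) = q := by field_simp
  have hPP : etaPP q t (xi / xj) = ((q ^ 2 * xj ^ 2 - xi ^ 2) / (xj ^ 2 - xi ^ 2)) / q := by
    rw [etaPP, hA, hB, div_div_div_comm, hq']
  have hMP : etaMP q t (xi / xj)
      = ((q ^ 2 * xj ^ 2 - t ^ 2 * xi ^ 2) / (xj ^ 2 - t ^ 2 * xi ^ 2)) / q := by
    rw [etaMP, hC, hD, div_div_div_comm, hqt']
  have hcan : ∀ X Z : ℂ, (X / q) / (Z / q) = X / Z := fun X Z => by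
    rw [div_div_div_comm, div_self hq, div_one]
  rw [hPP, hMP, hcan, ff, div_div_eq_mul_div,
    div_eq_div_iff h3' (mul_ne_zero h1' h3')]
  field_simp

end Stmt2Aux

namespace Stmt2Aux

lemma filter_decide_eq (m : ℕ) (S : Finset (Fin m)) :
    univ.filter (fun i => decide (i ∉ S) = false) = S := by
  ext i; simp

lemma gamma_eq_Ssum (q t : ℂ) (hq : q ≠ 0) (ht : t ≠ 0) (m : ℕ) (x : Fin m → ℂ)
    (hx : ∀ i, x i ≠ 0)
    (hgen : ∀ i j : Fin m, i ≠ j →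
      (x i) ^ 2 / (x j) ^ 2 ∉
        ({1, t ^ 2, (t ^ 2)⁻¹, q ^ 2, (q ^ 2)⁻¹, q ^ 2 * (t ^ 2)⁻¹, (q ^ 2)⁻¹ * t ^ 2} : Set ℂ))
    (k : ℕ) :
    (∑ ε ∈ univ.filter
        (fun ε : Fin m → Bool => (univ.filter (fun i => ε i = false)).card = k),
      gammaCoeff q t x ε)
      = Ssum (q ^ 2) (t ^ 2) (fun i => (x i) ^ 2) (univ : Finset (Fin m)) k := by
  classical
  unfold Ssum
  refine Finset.sum_nbij' (i := fun ε => univ.filter (fun i => ε i = false))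
    (j := fun S => fun i => decide (i ∉ S)) ?_ ?_ ?_ ?_ ?_
  · intro ε hε
    exact mem_powersetCard.mpr ⟨filter_subset _ _, (mem_filter.mp hε).2⟩
  · intro S hS
    refine mem_filter.mpr ⟨mem_univ _, ?_⟩
    rw [filter_decide_eq]
    exact (mem_powersetCard.mp hS).2
  · intro ε hε
    funext i
    rcases Bool.eq_false_or_eq_true (ε i) with h | h <;> simp [h]
  · intro S hS
    exact filter_decide_eq m S
  · intro ε hε
    unfold gammaCoeff
    have htrue : univ.filter (fun j => ε j = true)
        = univ \ univ.filter (fun i => ε i = false) := by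
      ext j
      simp only [mem_filter, mem_univ, true_and, mem_sdiff]
      rcases Bool.eq_false_or_eq_true (ε j) with h | h <;> simp [h]
    rw [htrue]
    refine Finset.prod_congr rfl fun i hi => Finset.prod_congr rfl fun j hj => ?_
    have hiS : i ∈ univ.filter (fun i => ε i = false) := hi
    have hij : i ≠ j := fun h => (mem_sdiff.mp hj).2 (h ▸ hiS)
    have hg := hgen i j hij
    simp only [Set.mem_insert_iff, Set.mem_singleton_iff, not_or] at hg
    obtain ⟨hg1, hg2, hg3, hg4, hg5, hg6, hg7⟩ := hg
    have hxj2 : (x j) ^ 2 ≠ 0 := pow_ne_zero _ (hx j)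
    have hxi2 : (x i) ^ 2 ≠ 0 := pow_ne_zero _ (hx i)
    have e1 : (x i) ^ 2 ≠ (x j) ^ 2 := fun h => hg1 (by rw [h, div_self hxj2])
    have e2 : t ^ 2 * (x i) ^ 2 ≠ (x j) ^ 2 := fun h => hg3 (by
      rw [← h]
      have := hx i; field_simp)
    have e3 : q ^ 2 * (x j) ^ 2 ≠ t ^ 2 * (x i) ^ 2 := fun h => hg6 (by
      have := hx j; field_simp
      linear_combination -h)
    exact eta_ratio q t (x i) (x j) (hx i) (hx j) hq ht e1 e2 e3

lemma Ssum_compl {m : ℕ} (c d : ℂ) (y : Fin m → ℂ) {n : ℕ} (hn : n ≤ m) :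
    Ssum c d y (univ : Finset (Fin m)) (m - n) = Ssum d c y univ n := by
  classical
  unfold Ssum
  refine Finset.sum_nbij' (i := fun S => univ \ S) (j := fun S => univ \ S) ?_ ?_ ?_ ?_ ?_
  · intro S hS
    obtain ⟨hsub, hcard⟩ := mem_powersetCard.mp hS
    refine mem_powersetCard.mpr ⟨sdiff_subset, ?_⟩
    rw [card_sdiff_of_subset hsub, hcard, card_univ, Fintype.card_fin]
    omega
  · intro S hS
    obtain ⟨hsub, hcard⟩ := mem_powersetCard.mp hS
    refine mem_powersetCard.mpr ⟨sdiff_subset, ?_⟩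
    rw [card_sdiff_of_subset hsub, hcard, card_univ, Fintype.card_fin]
  · intro S hS
    show univ \ (univ \ S) = S
    rw [Finset.sdiff_sdiff_self_left, Finset.univ_inter]
  · intro S hS
    show univ \ (univ \ S) = S
    rw [Finset.sdiff_sdiff_self_left, Finset.univ_inter]
  · intro S hS
    show (∏ i ∈ S, ∏ j ∈ univ \ S, ff c d (y i) (y j))
        = ∏ i ∈ univ \ S, ∏ j ∈ univ \ (univ \ S), ff d c (y i) (y j)
    rw [Finset.sdiff_sdiff_self_left, Finset.univ_inter, Finset.prod_comm]
    exact Finset.prod_congr rfl fun a ha => Finset.prod_congr rfl fun b hb =>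
      (ff_swap c d (y b) (y a)).symm

end Stmt2Aux

/-- Identity (3.20) of Theorem 3.1 of the paper: the sum of `γ_ε(q,t)` over sign vectors
with exactly `n` minus signs equals the sum over sign vectors with exactly `m - n` minus
signs. -/
theorem stmt2 (q t : ℂ) (hq : q ≠ 0) (ht : t ≠ 0) (m : ℕ) (hm : 1 ≤ m)
    (x : Fin m → ℂ) (hx : ∀ i, x i ≠ 0)
    (hgen : ∀ i j : Fin m, i ≠ j →
      (x i) ^ 2 / (x j) ^ 2 ∉
        ({1, t ^ 2, (t ^ 2)⁻¹, q ^ 2, (q ^ 2)⁻¹, q ^ 2 * (t ^ 2)⁻¹, (q ^ 2)⁻¹ * t ^ 2} : Set ℂ))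
    (n : ℕ) (hn : n ≤ m) :
    ∑ ε ∈ univ.filter
        (fun ε : Fin m → Bool => (univ.filter (fun i => ε i = false)).card = n),
      gammaCoeff q t x ε =
    ∑ ε ∈ univ.filter
        (fun ε : Fin m → Bool => (univ.filter (fun i => ε i = false)).card = m - n),
      gammaCoeff q t x ε := by
  classical
  rw [Stmt2Aux.gamma_eq_Ssum q t hq ht m x hx hgen n,
    Stmt2Aux.gamma_eq_Ssum q t hq ht m x hx hgen (m - n),
    Stmt2Aux.Ssum_compl (q ^ 2) (t ^ 2) _ hn]
  refine Stmt2Aux.Ssum_symm_C (q ^ 2) (t ^ 2) (fun i => (x i) ^ 2) ?_ ?_ ?_ n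
  all_goals intro i j hij
  · have hg := hgen i j hij
    simp only [Set.mem_insert_iff, Set.mem_singleton_iff, not_or] at hg
    have hxj2 : (x j) ^ 2 ≠ 0 := pow_ne_zero _ (hx j)
    refine sub_ne_zero.mpr fun h => hg.1 ?_
    have h' : (x j) ^ 2 = (x i) ^ 2 := h
    rw [← h', div_self hxj2]
  · have hg := hgen i j hij
    simp only [Set.mem_insert_iff, Set.mem_singleton_iff, not_or] at hg
    have hxj2 : (x j) ^ 2 ≠ 0 := pow_ne_zero _ (hx j)
    refine sub_ne_zero.mpr fun h => hg.2.2.2.2.2.1 ?_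
    have h' : q ^ 2 * (x j) ^ 2 = t ^ 2 * (x i) ^ 2 := h
    have := hx j; field_simp
    linear_combination -h'
  · have hg := hgen i j hij
    simp only [Set.mem_insert_iff, Set.mem_singleton_iff, not_or] at hg
    have hxj2 : (x j) ^ 2 ≠ 0 := pow_ne_zero _ (hx j)
    refine sub_ne_zero.mpr fun h => hg.2.2.2.2.2.2 ?_
    have h' : t ^ 2 * (x j) ^ 2 = q ^ 2 * (x i) ^ 2 := h
    have := hx j; field_simp
    linear_combination -h'
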